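/- arXiv:2007.02636 — 8 statements merged into one kernel-verified Lean document; each statement's English description precedes it below -/
import Mathlib

section
/- Let G be a finite group, F an arbitrary field of characteristic 2, and V a nontrivial irreducible FG-module that is self-dual (V ≅ V* as FG-modules). Then V affords a non-degenerate G-invariant alternating bilinear form. -/
open Module

section Defs
variable {F : Type} [Field F] {G : Type} [Group G]
variable {V W : Type} [AddCommGroup V] [Module F V] [AddCommGroup W] [Module F W]

def IsSubrep (ρ : Representation F G V) (U : Submodule F V) : Prop :=
  ∀ (g : G), ∀ v ∈ U, ρ g v ∈ U

def IsIrred (ρ : Representation F G V) : Prop :=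
  Nontrivial V ∧ ∀ U : Submodule F V, IsSubrep ρ U → U = ⊥ ∨ U = ⊤

def RepIso (ρ : Representation F G V) (σ : Representation F G W) : Prop :=
  ∃ e : V ≃ₗ[F] W, ∀ (g : G) (v : V), e (ρ g v) = σ g (e v)

def IsSelfDual (ρ : Representation F G V) : Prop :=
  RepIso ρ ρ.dual

def IsTrivialRep (ρ : Representation F G V) : Prop := ∀ (g : G) (v : V), ρ g v = v

def EquivHom (σ : Representation F G W) (ρ : Representation F G V) :
    Submodule F (W →ₗ[F] V) where
  carrier := {f | ∀ (g : G) (w : W), f (σ g w) = ρ g (f w)}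
  add_mem' := by
    intro f f' hf hf' g w
    simp [LinearMap.add_apply, hf g w, hf' g w]
  zero_mem' := by intro g w; simp
  smul_mem' := by
    intro c f hf g w
    simp [LinearMap.smul_apply, hf g w]

noncomputable def repMult (σ : Representation F G W) (ρ : Representation F G V) : ℕ :=
  Module.finrank F (EquivHom σ ρ)

def BilinInvariant (ρ : Representation F G V) (B : V →ₗ[F] V →ₗ[F] F) : Prop :=
  ∀ (g : G) (v w : V), B (ρ g v) (ρ g w) = B v w

def Nondeg (B : V →ₗ[F] V →ₗ[F] F) : Prop := ∀ v : V, (∀ w : V, B v w = 0) → v = 0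

def IsAltForm (B : V →ₗ[F] V →ₗ[F] F) : Prop := ∀ v : V, B v v = 0

def PolarizesTo (Q : V → F) (B : V →ₗ[F] V →ₗ[F] F) : Prop :=
  (∀ (a : F) (v : V), Q (a • v) = a ^ 2 * Q v) ∧
    ∀ v w : V, Q (v + w) = Q v + B v w + Q w

def QuadInvariant (ρ : Representation F G V) (Q : V → F) : Prop :=
  ∀ (g : G) (v : V), Q (ρ g v) = Q v

def HasQuadType (ρ : Representation F G V) : Prop :=
  ∃ (Q : V → F) (B : V →ₗ[F] V →ₗ[F] F),
    PolarizesTo Q B ∧ QuadInvariant ρ Q ∧ Nondeg B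

def IsSplitting (F G : Type) [Field F] [Group G] : Prop :=
  ∀ (V : Type) [AddCommGroup V] [Module F V] (ρ : Representation F G V),
    FiniteDimensional F V → IsIrred ρ →
      ∀ f ∈ EquivHom ρ ρ, ∃ c : F, f = c • (LinearMap.id : V →ₗ[F] V)

structure RepOn (F G : Type) [Field F] [Group G] where
  carrier : Type
  [ag : AddCommGroup carrier]
  [md : Module F carrier]
  rep : Representation F G carrier

attribute [instance] RepOn.ag RepOn.md

end Defs



section FongAux
variable {F : Type} [Field F] [CharP F 2] {G : Type} [Group G]
variable {V : Type} [AddCommGroup V] [Module F V]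

lemma rep_cancel (ρ : Representation F G V) (g : G) (w : V) : ρ g (ρ g⁻¹ w) = w := by
  rw [← Module.End.mul_apply, ← map_mul, mul_inv_cancel, map_one, Module.End.one_apply]

lemma rep_cancel' (ρ : Representation F G V) (g : G) (w : V) : ρ g⁻¹ (ρ g w) = w := by
  rw [← Module.End.mul_apply, ← map_mul, inv_mul_cancel, map_one, Module.End.one_apply]

lemma radical_subrep (ρ : Representation F G V) (C : V →ₗ[F] V →ₗ[F] F)
    (hinv : BilinInvariant ρ C) : IsSubrep ρ (LinearMap.ker C) := by
  intro g v hv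
  rw [LinearMap.mem_ker] at hv ⊢
  ext w
  have h1 : C (ρ g v) (ρ g (ρ g⁻¹ w)) = C v (ρ g⁻¹ w) := hinv g v (ρ g⁻¹ w)
  rw [rep_cancel] at h1
  simp [h1, hv]

lemma nondeg_of_ne_zero (ρ : Representation F G V) (hirr : IsIrred ρ)
    (C : V →ₗ[F] V →ₗ[F] F) (hinv : BilinInvariant ρ C) (hC : C ≠ 0) : Nondeg C := by
  intro v hv
  have hker := radical_subrep ρ C hinv
  rcases hirr.2 _ hker with h | h
  · have : v ∈ LinearMap.ker C := by
      rw [LinearMap.mem_ker]; ext w; exact hv w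
    rw [h] at this; simpa using this
  · exfalso; apply hC
    ext u w
    have : u ∈ LinearMap.ker C := h ▸ Submodule.mem_top
    rw [LinearMap.mem_ker] at this
    simp [this]

end FongAux

/-- Fong's Lemma: a nontrivial self-dual irreducible module over a field of
characteristic 2 affords a non-degenerate invariant alternating bilinear form. -/
theorem stmt_0 {F : Type} [Field F] [CharP F 2] {G : Type} [Group G] [Finite G]
    {V : Type} [AddCommGroup V] [Module F V] [FiniteDimensional F V]
    (ρ : Representation F G V) (hirr : IsIrred ρ) (hnt : ¬ IsTrivialRep ρ)
    (hsd : IsSelfDual ρ) :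
    ∃ B : V →ₗ[F] V →ₗ[F] F, BilinInvariant ρ B ∧ Nondeg B ∧ IsAltForm B := by
  obtain ⟨e, he⟩ := hsd
  haveI : Fact (Nat.Prime 2) := ⟨Nat.prime_two⟩
  -- The base invariant nondegenerate form
  set B : V →ₗ[F] V →ₗ[F] F := (e : V →ₗ[F] Module.Dual F V) with hBdef
  have hBapp : ∀ v w : V, B v w = e v w := fun v w => rfl
  have hBinv : BilinInvariant ρ B := by
    intro g v w
    have h1 : e (ρ g v) = (ρ.dual g) (e v) := he g v
    calc B (ρ g v) (ρ g w) = ((ρ.dual g) (e v)) (ρ g w) := by rw [hBapp, h1]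
      _ = e v (ρ g⁻¹ (ρ g w)) := rfl
      _ = B v w := by rw [rep_cancel', hBapp]
  by_cases hsym : ∀ v w : V, B v w = B w v
  · -- symmetric case: consider K = {v | B v v = 0}
    have two0 : (2 : F) = 0 := by
      have := CharP.cast_eq_zero F 2; exact_mod_cast this
    have addself : ∀ x : F, x + x = 0 := by
      intro x
      have : (2 : F) * x = 0 := by rw [two0, zero_mul]
      calc x + x = 2 * x := by ring
        _ = 0 := this
    let K : Submodule F V :=
      { carrier := {v | B v v = 0}
        add_mem' := by
          intro a b ha hb
          simp only [Set.mem_setOf_eq, map_add, LinearMap.add_apply] at ha hb ⊢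
          rw [ha, hb, hsym b a]
          rw [zero_add, add_zero]
          exact addself _
        zero_mem' := by simp
        smul_mem' := by
          intro c v hv
          simp only [Set.mem_setOf_eq, map_smul, LinearMap.smul_apply, smul_eq_mul] at hv ⊢
          rw [hv, mul_zero, mul_zero] }
    have hKmem : ∀ v : V, v ∈ K ↔ B v v = 0 := fun v => Iff.rfl
    have hKsub : IsSubrep ρ K := by
      intro g v hv
      rw [hKmem] at hv ⊢
      rw [hBinv g v v]; exact hv
    rcases hirr.2 K hKsub with h | h
    · -- K = ⊥ : rep is trivial, contradiction
      exfalso; apply hnt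
      intro g v
      have hu : ρ g v - v ∈ K := by
        rw [hKmem]
        simp only [map_sub, LinearMap.sub_apply]
        rw [hBinv g v v, hsym v (ρ g v)]
        have h2 : B (ρ g v) v + B (ρ g v) v = 0 := addself _
        have h3 : B v v + B v v = 0 := addself _
        -- B v v - B (ρ g v) v - (B (ρ g v) v - B v v) = 0
        have : ∀ a b : F, a + a = 0 → b + b = 0 → a - b - (b - a) = 0 := by
          intro a b ha hb
          have : a - b - (b - a) = (a + a) - (b + b) := by ring
          rw [this, ha, hb, sub_zero]
        exact this _ _ h3 h2
      rw [h] at hu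
      have : ρ g v - v = 0 := by simpa using hu
      exact sub_eq_zero.mp this
    · -- K = ⊤ : B itself is alternating
      refine ⟨B, hBinv, ?_, ?_⟩
      · intro v hv
        have : e v = 0 := by ext w; exact hv w
        have := e.injective (by rw [this, map_zero] : e v = e 0)
        exact this
      · intro v
        have : v ∈ K := h ▸ Submodule.mem_top
        exact (hKmem v).mp this
  · -- non-symmetric case: S = B + Bᵀ
    push_neg at hsym
    obtain ⟨v₀, w₀, hvw⟩ := hsym
    have two0 : (2 : F) = 0 := by
      have := CharP.cast_eq_zero F 2; exact_mod_cast this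
    have addself : ∀ x : F, x + x = 0 := by
      intro x
      have : (2 : F) * x = 0 := by rw [two0, zero_mul]
      calc x + x = 2 * x := by ring
        _ = 0 := this
    set S : V →ₗ[F] V →ₗ[F] F := B + B.flip with hSdef
    have hSapp : ∀ v w : V, S v w = B v w + B w v := by
      intro v w; simp [hSdef]
    have hSinv : BilinInvariant ρ S := by
      intro g v w
      rw [hSapp, hSapp, hBinv g v w, hBinv g w v]
    have hSne : S ≠ 0 := by
      intro h0
      apply hvw
      have : S v₀ w₀ = 0 := by rw [h0]; rfl
      rw [hSapp] at this
      linear_combination this - addself (B w₀ v₀)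
    refine ⟨S, hSinv, nondeg_of_ne_zero ρ hirr S hSinv hSne, ?_⟩
    intro v
    rw [hSapp]
    exact addself _
end

section
/- Let G be a finite group, F an arbitrary field of characteristic 2, and V a nontrivial self-dual irreducible FG-module. Then dim_F V is even. -/
open Module

/-- Auxiliary: a nondegenerate alternating bilinear form forces even dimension. -/
theorem even_finrank_of_alt_nondeg (F : Type) [Field F] :
    ∀ (n : ℕ) (V : Type) [AddCommGroup V] [Module F V] [FiniteDimensional F V]
      (B : LinearMap.BilinForm F V), B.IsAlt → B.Nondegenerate →
      Module.finrank F V = n → Even n := by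
  intro n
  induction n using Nat.strong_induction_on with
  | _ n ih =>
    intro V _ _ _ B halt hnd hrank
    rcases Nat.eq_zero_or_pos n with h0 | hpos
    · exact h0 ▸ Even.zero
    · have hrefl : B.IsRefl := halt.isRefl
      have : Nontrivial V := by
        apply Module.nontrivial_of_finrank_pos (R := F) (M := V); omega
      obtain ⟨v, hv⟩ := exists_ne (0 : V)
      have hex : ∃ w, B v w ≠ 0 := by
        by_contra h
        push_neg at h
        exact hv (hnd.1 v h)
      obtain ⟨w, hw⟩ := hex
      have hli : LinearIndependent F ![v, w] := by
        rw [LinearIndependent.pair_iff]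
        intro s t hst
        have h1 : B (s • v + t • w) w = 0 := by rw [hst]; simp
        have h2 : B v (s • v + t • w) = 0 := by rw [hst]; simp
        simp only [map_add, map_smul, LinearMap.add_apply, LinearMap.smul_apply,
          smul_eq_mul, halt w, halt v] at h1 h2
        have hs : s = 0 := by
          have := h1
          simp only [mul_zero, add_zero] at this
          exact (mul_eq_zero.mp this).resolve_right hw
        have ht : t = 0 := by
          have := h2
          simp only [mul_zero, zero_add] at this
          exact (mul_eq_zero.mp this).resolve_right hw
        exact ⟨hs, ht⟩
      set W : Submodule F V := Submodule.span F (Set.range ![v, w]) with hWdef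
      have hvW : v ∈ W := Submodule.subset_span ⟨0, rfl⟩
      have hwW : w ∈ W := Submodule.subset_span ⟨1, rfl⟩
      have hW2 : Module.finrank F W = 2 := by
        rw [hWdef, finrank_span_eq_card hli]
        simp
      have hres : (B.restrict W).Nondegenerate := by
        refine LinearMap.BilinForm.Nondegenerate.ofSeparatingLeft ?_
        intro u hu
        obtain ⟨u, huW⟩ := u
        rw [Submodule.mem_span_range_iff_exists_fun] at huW
        obtain ⟨c, hc⟩ := huW
        have hc' : c 0 • v + c 1 • w = u := by
          simpa [Fin.sum_univ_two] using hc
        have h1 : B u w = 0 := by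
          simpa using hu ⟨w, hwW⟩
        have h2 : B u v = 0 := by
          simpa using hu ⟨v, hvW⟩
        have e1 : c 0 * B v w = 0 := by
          rw [← h1, ← hc']
          simp [halt w]
        have e2 : c 1 * B w v = 0 := by
          rw [← h2, ← hc']
          simp [halt v]
        have hwv : B w v ≠ 0 := by
          rw [← halt.neg_eq]
          simpa using hw
        have hc0 : c 0 = 0 := (mul_eq_zero.mp e1).resolve_right hw
        have hc1 : c 1 = 0 := (mul_eq_zero.mp e2).resolve_right hwv
        ext
        simp [← hc', hc0, hc1]
      have hcompl : IsCompl W (B.orthogonal W) :=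
        LinearMap.BilinForm.isCompl_orthogonal_of_restrict_nondegenerate hrefl hres
      have hsum : Module.finrank F W + Module.finrank F (B.orthogonal W) = n := by
        rw [← hrank, ← Submodule.finrank_add_eq_of_isCompl hcompl]
      have horthnd : (B.restrict (B.orthogonal W)).Nondegenerate := by
        apply LinearMap.BilinForm.nondegenerate_restrict_of_disjoint_orthogonal B hrefl
        rw [LinearMap.BilinForm.orthogonal_orthogonal hnd hrefl]
        exact hcompl.disjoint.symm
      have horthalt : (B.restrict (B.orthogonal W)).IsAlt := fun x => halt x
      have hlt : Module.finrank F (B.orthogonal W) < n := by omega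
      have heven : Even (Module.finrank F (B.orthogonal W)) :=
        ih _ hlt _ _ horthalt horthnd rfl
      have : n = 2 + Module.finrank F (B.orthogonal W) := by omega
      rw [this]
      exact Even.add even_two heven

/-- a nontrivial self-dual irreducible module in characteristic 2 has even
dimension. -/
theorem stmt_1 {F : Type} [Field F] [CharP F 2] {G : Type} [Group G] [Finite G]
    {V : Type} [AddCommGroup V] [Module F V] [FiniteDimensional F V]
    (ρ : Representation F G V) (hirr : IsIrred ρ) (hnt : ¬ IsTrivialRep ρ)
    (hsd : IsSelfDual ρ) :
    Even (Module.finrank F V) := by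
  obtain ⟨e, he⟩ := hsd
  -- The invariant nondegenerate bilinear form coming from self-duality
  set B : LinearMap.BilinForm F V := e.toLinearMap with hBdef
  have hBapp : ∀ v w : V, B v w = e v w := fun v w => rfl
  have hBinv : ∀ (g : G) (v w : V), B (ρ g v) (ρ g w) = B v w := by
    intro g v w
    rw [hBapp, he g v, Representation.dual_apply]
    show (e v) ((ρ g⁻¹) ((ρ g) w)) = (e v) w
    rw [← Module.End.mul_apply, ← map_mul, inv_mul_cancel, map_one, Module.End.one_apply]
  have hBnd : B.Nondegenerate := by
    refine LinearMap.BilinForm.Nondegenerate.ofSeparatingLeft ?_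
    intro v hv
    have h0 : e v = 0 := by
      ext w; exact hv w
    exact e.map_eq_zero_iff.mp h0
  -- The alternating "symmetrization"
  set S : LinearMap.BilinForm F V := B + B.flip with hSdef
  have hSapp : ∀ v w : V, S v w = B v w + B w v := fun v w => rfl
  have hSalt : S.IsAlt := by
    intro v
    rw [hSapp]
    exact CharTwo.add_self_eq_zero _
  have hSinv : ∀ (g : G) (v w : V), S (ρ g v) (ρ g w) = S v w := by
    intro g v w
    rw [hSapp, hSapp, hBinv, hBinv]
  have hSinv' : ∀ (g : G) (v w : V), S (ρ g v) w = S v (ρ g⁻¹ w) := by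
    intro g v w
    have hgw : ρ g (ρ g⁻¹ w) = w := by
      rw [← Module.End.mul_apply, ← map_mul, mul_inv_cancel, map_one, Module.End.one_apply]
    conv_lhs => rw [← hgw]
    rw [hSinv]
  have hSsub : IsSubrep ρ (LinearMap.ker S) := by
    intro g v hv
    rw [LinearMap.mem_ker] at hv ⊢
    ext w
    rw [LinearMap.zero_apply, hSinv' g v w, hv]
    rfl
  rcases hirr.2 _ hSsub with hbot | htop
  · -- S is nondegenerate alternating
    have hSnd : S.Nondegenerate := by
      refine LinearMap.BilinForm.Nondegenerate.ofSeparatingLeft ?_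
      intro v hv
      have : v ∈ LinearMap.ker S := by
        rw [LinearMap.mem_ker]; ext w; exact hv w
      rw [hbot] at this
      simpa using this
    exact even_finrank_of_alt_nondeg F _ V S hSalt hSnd rfl
  · -- S = 0, i.e. B is symmetric; look at the quadratic kernel
    have hS0 : ∀ v w : V, B v w + B w v = 0 := by
      intro v w
      have : v ∈ LinearMap.ker S := htop ▸ Submodule.mem_top
      rw [LinearMap.mem_ker] at this
      have := congrArg (fun f => f w) this
      simpa [hSapp] using (hSapp v w ▸ this)
    have hsymm : ∀ v w : V, B w v = B v w := by
      intro v w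
      have h := hS0 v w
      rw [add_eq_zero_iff_eq_neg, CharTwo.neg_eq] at h
      exact h.symm
    set K : Submodule F V :=
      { carrier := {v | B v v = 0}
        add_mem' := by
          intro a b ha hb
          simp only [Set.mem_setOf_eq, map_add, LinearMap.add_apply] at ha hb ⊢
          rw [ha, hb, hsymm a b]
          simp [CharTwo.add_self_eq_zero]
        zero_mem' := by simp
        smul_mem' := by
          intro c x hx
          simp only [Set.mem_setOf_eq, map_smul, LinearMap.smul_apply,
            smul_eq_mul] at hx ⊢
          simp [hx] } with hKdef
    have hKmem : ∀ v : V, v ∈ K ↔ B v v = 0 := fun v => Iff.rfl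
    have hKsub : IsSubrep ρ K := by
      intro g v hv
      rw [hKmem] at hv ⊢
      rw [hBinv g v v]
      exact hv
    rcases hirr.2 _ hKsub with hKbot | hKtop
    · -- K = ⊥ forces the representation to be trivial: contradiction
      exfalso
      apply hnt
      intro g v
      have hmem : ρ g v - v ∈ K := by
        rw [hKmem]
        have expand : B (ρ g v - v) (ρ g v - v) =
            B (ρ g v) (ρ g v) - B (ρ g v) v - B v (ρ g v) + B v v := by
          simp only [map_sub, LinearMap.sub_apply]
          ring
        rw [expand, hBinv g v v, hsymm (ρ g v) v]
        linear_combination CharTwo.add_self_eq_zero (B v v) -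
          CharTwo.add_self_eq_zero (B (ρ g v) v)
      rw [hKbot] at hmem
      have : ρ g v - v = 0 := by simpa using hmem
      exact sub_eq_zero.mp this
    · -- K = ⊤ means B itself is alternating
      have hBalt : B.IsAlt := by
        intro v
        have : v ∈ K := hKtop ▸ Submodule.mem_top
        exact (hKmem v).mp this
      exact even_finrank_of_alt_nondeg F _ V B hBalt hBnd rfl
end

section
/- Let G be a finite group, F a splitting field for G of characteristic 2, and let d_1, ..., d_ℓ be the dimensions of the irreducible FG-modules. Then d_1² + ... + d_ℓ² is odd. -/
open Module

section Aux
variable {F : Type} [Field F] {G : Type} [Group G]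
variable {V W X : Type} [AddCommGroup V] [Module F V] [AddCommGroup W] [Module F W]
  [AddCommGroup X] [Module F X]

lemma rep_inv_apply (ρ : Representation F G V) (g : G) (v : V) : ρ g⁻¹ (ρ g v) = v := by
  have h : ρ g⁻¹ * ρ g = 1 := by rw [← map_mul, inv_mul_cancel, map_one]
  have := congrArg (fun f : Module.End F V => f v) h
  simpa using this

lemma rep_dual_apply (ρ : Representation F G V) (g : G) (f : Module.Dual F V) (v : V) :
    ρ.dual g f v = f (ρ g⁻¹ v) := rfl

lemma RepIso.symm' {ρ : Representation F G V} {τ : Representation F G W}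
    (h : RepIso ρ τ) : RepIso τ ρ := by
  obtain ⟨e, he⟩ := h
  refine ⟨e.symm, fun g w => e.injective ?_⟩
  rw [he, e.apply_symm_apply, e.apply_symm_apply]

lemma RepIso.trans' {ρ : Representation F G V} {τ : Representation F G W}
    {υ : Representation F G X} (h : RepIso ρ τ) (h' : RepIso τ υ) : RepIso ρ υ := by
  obtain ⟨e, he⟩ := h; obtain ⟨e', he'⟩ := h'
  exact ⟨e.trans e', fun g v => by simp [LinearEquiv.trans_apply, he, he']⟩

lemma RepIso.finrank_eq' {ρ : Representation F G V} {τ : Representation F G W}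
    (h : RepIso ρ τ) : finrank F V = finrank F W := by
  obtain ⟨e, -⟩ := h; exact e.finrank_eq

lemma RepIso.dual' {ρ : Representation F G V} {τ : Representation F G W}
    (h : RepIso ρ τ) : RepIso ρ.dual τ.dual := by
  obtain ⟨e, he⟩ := h
  refine ⟨e.symm.dualMap, fun g f => ?_⟩
  ext w
  simp only [LinearEquiv.dualMap_apply, rep_dual_apply]
  congr 1
  apply e.injective
  rw [e.apply_symm_apply, he, e.apply_symm_apply]

lemma repIso_double_dual [FiniteDimensional F V] (ρ : Representation F G V) :
    RepIso ρ ρ.dual.dual := by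
  refine ⟨Module.evalEquiv F V, fun g v => ?_⟩
  ext f
  show f (ρ g v) = (ρ.dual g⁻¹ f) v
  rw [rep_dual_apply]
  simp


lemma dual_irred [FiniteDimensional F V] {ρ : Representation F G V} (h : IsIrred ρ) :
    IsIrred ρ.dual := by
  obtain ⟨hnt, hsub⟩ := h
  constructor
  · have h1 : 0 < finrank F V := finrank_pos
    have h2 : 0 < finrank F (Module.Dual F V) := by rwa [Subspace.dual_finrank_eq]
    exact Module.nontrivial_of_finrank_pos h2
  · intro U hU
    have hco : IsSubrep ρ U.dualCoannihilator := by
      intro g v hv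
      rw [Submodule.mem_dualCoannihilator] at hv ⊢
      intro f hf
      have : ρ.dual g⁻¹ f ∈ U := hU g⁻¹ f hf
      have := hv _ this
      rwa [rep_dual_apply, inv_inv] at this
    rcases hsub _ hco with hbot | htop
    · right
      have := Subspace.finrank_add_finrank_dualCoannihilator_eq U
      rw [hbot, finrank_bot, add_zero] at this
      apply Submodule.eq_top_of_finrank_eq
      rw [this, Subspace.dual_finrank_eq]
    · left
      rw [Submodule.eq_bot_iff]
      intro f hf
      ext v
      have : v ∈ U.dualCoannihilator := htop ▸ Submodule.mem_top
      rw [Submodule.mem_dualCoannihilator] at this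
      simpa using this f hf

lemma trivial_rep_irred : IsIrred (Representation.trivial F (G := G) (V := F)) := by
  refine ⟨inferInstance, fun U _ => ?_⟩
  rcases eq_or_ne U ⊥ with h | h
  · exact Or.inl h
  · right
    obtain ⟨x, hx, hx0⟩ := Submodule.exists_mem_ne_zero_of_ne_bot h
    rw [Submodule.eq_top_iff']
    intro y
    have : y = (y * x⁻¹) • x := by rw [smul_eq_mul, mul_assoc, inv_mul_cancel₀ hx0, mul_one]
    rw [this]
    exact U.smul_mem _ hx

lemma RepIso.trivial' {ρ : Representation F G V} {τ : Representation F G W}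
    (h : RepIso ρ τ) (ht : IsTrivialRep ρ) : IsTrivialRep τ := by
  obtain ⟨e, he⟩ := h
  intro g w
  have := he g (e.symm w)
  rw [ht] at this
  simpa using this.symm

lemma trivial_dual {ρ : Representation F G V} (h : IsTrivialRep ρ) :
    IsTrivialRep ρ.dual := by
  intro g f
  ext v
  rw [rep_dual_apply, h]

lemma trivial_repIso [FiniteDimensional F V] [FiniteDimensional F W]
    {ρ : Representation F G V} {τ : Representation F G W}
    (hρ : IsTrivialRep ρ) (hτ : IsTrivialRep τ) (hrk : finrank F V = finrank F W) :
    RepIso ρ τ := by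
  obtain ⟨e⟩ := FiniteDimensional.nonempty_linearEquiv_of_finrank_eq hrk
  exact ⟨e, fun g v => by rw [hρ, hτ]⟩

lemma trivial_finrank_one {ρ : Representation F G V} (ht : IsTrivialRep ρ)
    (h : IsIrred ρ) : finrank F V = 1 := by
  obtain ⟨hnt, hsub⟩ := h
  obtain ⟨v, hv⟩ := exists_ne (0 : V)
  have hsp : IsSubrep ρ (F ∙ v) := fun g w hw => by rw [ht]; exact hw
  rcases hsub _ hsp with hb | htop
  · exact absurd (Submodule.span_eq_bot.mp hb v (Set.mem_singleton v)) hv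
  · rw [← finrank_top F V, ← htop]
    exact finrank_span_singleton hv


lemma char2_add_self [CharP F 2] (v : V) : v + v = 0 := by
  rw [← two_smul F v, show (2 : F) = 0 from CharTwo.two_eq_zero, zero_smul]

lemma char2_neg_eq [CharP F 2] (v : V) : -v = v := by
  rw [neg_eq_iff_add_eq_zero, char2_add_self (F := F)]

lemma alt_nondeg_even_aux (n : ℕ) :
    ∀ (V : Type) [AddCommGroup V] [Module F V] [FiniteDimensional F V],
      finrank F V = n → ∀ B : LinearMap.BilinForm F V, B.IsAlt → B.Nondegenerate → Even n := by
  induction n using Nat.strong_induction_on with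
  | _ n ih =>
    intro V _ _ _ hrk B halt hnd
    rcases Nat.eq_zero_or_pos n with h0 | hpos
    · simp [h0]
    have hVnt : Nontrivial V := Module.nontrivial_of_finrank_pos (hrk ▸ hpos)
    obtain ⟨v, hv⟩ := exists_ne (0 : V)
    obtain ⟨w, hw⟩ : ∃ w, B v w ≠ 0 := by
      by_contra hc
      push_neg at hc
      exact hv (hnd.1 v hc)
    have hwv : B w v ≠ 0 := by
      intro h
      apply hw
      rw [← halt.neg_eq, h, neg_zero]
    have hw0 : w ≠ 0 := by rintro rfl; simp at hw
    have hli : LinearIndependent F ![v, w] := by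
      rw [LinearIndependent.pair_iff]
      intro a b hab
      have h1 : B (a • v + b • w) w = 0 := by rw [hab]; simp
      rw [map_add, LinearMap.map_smul, LinearMap.map_smul] at h1
      simp only [LinearMap.add_apply, LinearMap.smul_apply, smul_eq_mul, halt w,
        mul_zero, add_zero] at h1
      have ha : a = 0 := by
        rcases mul_eq_zero.mp h1 with h | h
        · exact h
        · exact absurd h hw
      have hb : b = 0 := by
        rw [ha, zero_smul, zero_add] at hab
        rcases smul_eq_zero.mp hab with h | h
        · exact h
        · exact absurd h hw0
      exact ⟨ha, hb⟩
    set Wsub : Submodule F V := Submodule.span F {v, w} with hWsub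
    have hrkW : finrank F Wsub = 2 := by
      have hr : Set.range ![v, w] = {v, w} := by
        ext x
        simp [Fin.exists_fin_two, or_comm]
      have := finrank_span_eq_card hli
      rw [hr] at this
      rw [hWsub, this, Fintype.card_fin]
    have hrest : (B.restrict Wsub).Nondegenerate := by
      refine LinearMap.BilinForm.Nondegenerate.ofSeparatingLeft ?_
      rintro ⟨x, hx⟩ hxall
      have hmv : v ∈ Wsub := Submodule.subset_span (by simp)
      have hmw : w ∈ Wsub := Submodule.subset_span (by simp)
      obtain ⟨a, b, hab⟩ := Submodule.mem_span_pair.mp hx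
      have h1 : B x w = 0 := hxall ⟨w, hmw⟩
      have h2 : B x v = 0 := hxall ⟨v, hmv⟩
      rw [← hab, map_add, LinearMap.map_smul, LinearMap.map_smul] at h1 h2
      simp only [LinearMap.add_apply, LinearMap.smul_apply, smul_eq_mul, halt w, halt v,
        mul_zero, add_zero, zero_add] at h1 h2
      have ha : a = 0 := by
        rcases mul_eq_zero.mp h1 with h | h
        · exact h
        · exact absurd h hw
      have hb : b = 0 := by
        rcases mul_eq_zero.mp h2 with h | h
        · exact h
        · exact absurd h hwv
      have hx0 : x = 0 := by
        rw [← hab, ha, hb]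
        simp
      exact Subtype.ext hx0
    have hcompl : IsCompl Wsub (B.orthogonal Wsub) :=
      LinearMap.BilinForm.isCompl_orthogonal_of_restrict_nondegenerate halt.isRefl hrest
    have hsum : finrank F Wsub + finrank F (B.orthogonal Wsub) = n := by
      rw [← hrk]
      exact Submodule.finrank_add_eq_of_isCompl hcompl
    set O := B.orthogonal Wsub with hO
    have haltO : (B.restrict O).IsAlt := fun x => halt x
    have hndO : (B.restrict O).Nondegenerate := by
      apply LinearMap.BilinForm.nondegenerate_restrict_of_disjoint_orthogonal B halt.isRefl
      rw [LinearMap.BilinForm.orthogonal_orthogonal hnd halt.isRefl]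
      exact hcompl.disjoint.symm
    have hlt : finrank F O < n := by omega
    have hevenO : Even (finrank F O) :=
      ih _ hlt O rfl (B.restrict O) haltO hndO
    have : n = 2 + finrank F O := by omega
    rw [this]
    exact (even_two).add hevenO

lemma alt_nondeg_even [FiniteDimensional F V] (B : LinearMap.BilinForm F V)
    (halt : B.IsAlt) (hnd : B.Nondegenerate) : Even (finrank F V) :=
  alt_nondeg_even_aux (finrank F V) V rfl B halt hnd


lemma selfdual_dichotomy [CharP F 2] [FiniteDimensional F V] {ρ : Representation F G V}
    (hirr : IsIrred ρ) (hsd : RepIso ρ ρ.dual) :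
    Even (finrank F V) ∨ (finrank F V = 1 ∧ IsTrivialRep ρ) := by
  obtain ⟨e, he⟩ := hsd
  set B : LinearMap.BilinForm F V := e.toLinearMap with hBdef
  have hBapp : ∀ x y : V, B x y = e x y := fun x y => rfl
  have hBinv : ∀ (g : G) (x y : V), B (ρ g x) (ρ g y) = B x y := by
    intro g x y
    rw [hBapp, hBapp, he, rep_dual_apply, rep_inv_apply]
  have hBnd : B.Nondegenerate := by
    refine LinearMap.BilinForm.Nondegenerate.ofSeparatingLeft ?_
    intro x hx
    have hex : e x = 0 := by ext y; exact hx y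
    exact e.map_eq_zero_iff.mp hex
  set C : LinearMap.BilinForm F V := B + B.flip with hCdef
  have hCapp : ∀ x y : V, C x y = B x y + B y x := fun x y => rfl
  have hCinv : ∀ (g : G) (x y : V), C (ρ g x) (ρ g y) = C x y := by
    intro g x y
    rw [hCapp, hCapp, hBinv, hBinv]
  have hCalt : C.IsAlt := by
    intro x
    rw [hCapp]
    exact char2_add_self (F := F) _
  have hCsub : IsSubrep ρ (LinearMap.ker C) := by
    intro g x hx
    rw [LinearMap.mem_ker] at hx ⊢
    ext y
    have h1 : C (ρ g x) y = C (ρ g x) (ρ g (ρ g⁻¹ y)) := by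
      congr 1
      rw [show ρ g (ρ g⁻¹ y) = y by simpa using rep_inv_apply ρ g⁻¹ y]
    rw [LinearMap.zero_apply, h1, hCinv]
    have : C x = 0 := hx
    rw [this]
    rfl
  rcases hirr.2 _ hCsub with hCbot | hCtop
  · left
    have hCnd : C.Nondegenerate := by
      refine LinearMap.BilinForm.Nondegenerate.ofSeparatingLeft ?_
      intro x hx
      have : x ∈ LinearMap.ker C := by
        rw [LinearMap.mem_ker]
        ext y
        exact hx y
      rwa [hCbot, Submodule.mem_bot] at this
    exact alt_nondeg_even C hCalt hCnd
  · -- B is symmetric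
    have hsym : ∀ x y : V, B x y = B y x := by
      intro x y
      have hx : x ∈ LinearMap.ker C := hCtop ▸ Submodule.mem_top
      rw [LinearMap.mem_ker] at hx
      have : C x y = 0 := by rw [hx]; rfl
      rw [hCapp] at this
      have h2 : B x y = -(B y x) := eq_neg_of_add_eq_zero_left this
      rwa [char2_neg_eq (F := F)] at h2
    -- the kernel of the quadratic form v ↦ B v v
    set kerQ : Submodule F V :=
      { carrier := {x | B x x = 0}
        add_mem' := by
          intro a b ha hb
          simp only [Set.mem_setOf_eq] at ha hb ⊢
          simp only [map_add, LinearMap.add_apply]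
          rw [ha, hb, hsym b a]
          linear_combination char2_add_self (F := F) (B a b)
        zero_mem' := by simp
        smul_mem' := by
          intro c x hx
          simp only [Set.mem_setOf_eq] at hx ⊢
          simp [map_smul, LinearMap.smul_apply, hx]
      } with hkerQ
    have hkmem : ∀ x : V, x ∈ kerQ ↔ B x x = 0 := fun x => Iff.rfl
    have hQsub : IsSubrep ρ kerQ := by
      intro g x hx
      rw [hkmem] at hx ⊢
      rw [hBinv]
      exact hx
    rcases hirr.2 _ hQsub with hQbot | hQtop
    · right
      have htriv : IsTrivialRep ρ := by
        intro g x
        have hmem : ρ g x + x ∈ kerQ := by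
          rw [hkmem]
          simp only [map_add, LinearMap.add_apply]
          rw [hBinv g x x, hsym (ρ g x) x]
          linear_combination char2_add_self (F := F) (B x x) + char2_add_self (F := F) (B x ((ρ g) x))
        rw [hQbot, Submodule.mem_bot] at hmem
        have : ρ g x = -x := by
          rw [eq_neg_iff_add_eq_zero]
          exact hmem
        rwa [char2_neg_eq (F := F)] at this
      exact ⟨trivial_finrank_one htriv hirr, htriv⟩
    · left
      have hBalt : B.IsAlt := by
        intro x
        have : x ∈ kerQ := hQtop ▸ Submodule.mem_top
        rwa [hkmem] at this
      exact alt_nondeg_even B hBalt hBnd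

end Aux


section Parity

lemma even_natCast_zmod_two {n : ℕ} (h : Even n) : (n : ZMod 2) = 0 := by
  obtain ⟨k, rfl⟩ := h
  push_cast
  rw [← two_mul, show (2 : ZMod 2) = 0 by decide, zero_mul]

lemma odd_of_natCast_zmod_two {n : ℕ} (h : (n : ZMod 2) = 1) : Odd n := by
  rcases Nat.even_or_odd n with he | ho
  · rw [even_natCast_zmod_two he] at h
    exact absurd h (by decide)
  · exact ho

end Parity




/-- over a splitting field of characteristic 2, the sum of the squares of the
dimensions of the irreducible FG-modules is odd. -/
theorem stmt_3 {F : Type} [Field F] [CharP F 2] {G : Type} [Group G] [Finite G]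
    {ι : Type} [Fintype ι] {V : ι → Type} [∀ i, AddCommGroup (V i)] [∀ i, Module F (V i)]
    (σ : ∀ i, Representation F G (V i))
    (hfd : ∀ i, FiniteDimensional F (V i)) (hirr : ∀ i, IsIrred (σ i))
    (habs : ∀ i, ∀ f ∈ EquivHom (σ i) (σ i),
      ∃ c : F, f = c • (LinearMap.id : V i →ₗ[F] V i))
    (hdist : ∀ i j, i ≠ j → ¬ RepIso (σ i) (σ j))
    (hcomplete : ∀ (W : Type) [AddCommGroup W] [Module F W] (τ : Representation F G W),
      FiniteDimensional F W → IsIrred τ → ∃ i, RepIso τ (σ i)) :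
    Odd (∑ i, Module.finrank F (V i) ^ 2) := by
  classical
  have hdirr : ∀ i, IsIrred (σ i).dual := fun i => dual_irred (hirr i)
  have hT : ∀ i, ∃ j, RepIso (σ i).dual (σ j) := fun i =>
    hcomplete _ (σ i).dual inferInstance (hdirr i)
  choose t ht using hT
  have htt : ∀ i, t (t i) = i := by
    intro i
    by_contra hne
    have h1 : RepIso (σ i) (σ (t (t i))) :=
      ((repIso_double_dual (σ i)).trans' ((ht i).dual')).trans' (ht (t i))
    exact hdist i (t (t i)) (fun h => hne h.symm) h1
  have hdeq : ∀ i, Module.finrank F (V (t i)) = Module.finrank F (V i) := by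
    intro i
    have h1 := (ht i).finrank_eq'
    rw [Subspace.dual_finrank_eq] at h1
    exact h1.symm
  -- the trivial representation appears in the list
  obtain ⟨i₀, hi₀⟩ := hcomplete F (Representation.trivial F (G := G) (V := F))
    inferInstance trivial_rep_irred
  have htriv₀ : IsTrivialRep (σ i₀) := hi₀.trivial' (fun g v => rfl)
  have hrk₀ : Module.finrank F (V i₀) = 1 := by
    have := hi₀.finrank_eq'
    rw [Module.finrank_self] at this
    exact this.symm
  have hsd₀ : RepIso (σ i₀) (σ i₀).dual :=
    trivial_repIso htriv₀ (trivial_dual htriv₀) (Subspace.dual_finrank_eq).symm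
  have hfix₀ : t i₀ = i₀ := by
    by_contra hne
    exact hdist i₀ (t i₀) (fun h => hne h.symm) (hsd₀.trans' (ht i₀))
  -- parity computation in ZMod 2
  apply odd_of_natCast_zmod_two
  push_cast
  rw [← Finset.sum_filter_add_sum_filter_not Finset.univ (fun i => t i = i)
    (fun i => ((Module.finrank F (V i) : ZMod 2)) ^ 2)]
  have hnonfix : ∑ i ∈ Finset.univ.filter (fun i => ¬ t i = i),
      ((Module.finrank F (V i) : ZMod 2)) ^ 2 = 0 := by
    apply Finset.sum_involution (g := fun a _ => t a)
    · intro a _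
      rw [hdeq a]
      exact char2_add_self (F := ZMod 2) _
    · intro a ha _
      exact (Finset.mem_filter.mp ha).2
    · intro a ha
      rcases Finset.mem_filter.mp ha with ⟨-, ha2⟩
      refine Finset.mem_filter.mpr ⟨Finset.mem_univ _, fun h => ha2 ?_⟩
      have h2 := htt a
      rw [h] at h2
      exact h2
    · intro a _
      exact htt a
  have hfix : ∑ i ∈ Finset.univ.filter (fun i => t i = i),
      ((Module.finrank F (V i) : ZMod 2)) ^ 2 = 1 := by
    have h1 : ∑ i ∈ Finset.univ.filter (fun i => t i = i),
        ((Module.finrank F (V i) : ZMod 2)) ^ 2 = ((Module.finrank F (V i₀) : ZMod 2)) ^ 2 := by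
      refine Finset.sum_eq_single_of_mem i₀ ?_ ?_
      · exact Finset.mem_filter.mpr ⟨Finset.mem_univ _, hfix₀⟩
      intro b hb hbne
      rcases Finset.mem_filter.mp hb with ⟨-, hbfix⟩
      have hsdb : RepIso (σ b) (σ b).dual := by
        have := ht b
        rw [hbfix] at this
        exact this.symm'
      rcases selfdual_dichotomy (hirr b) hsdb with heven | ⟨hrkb, htrivb⟩
      · rw [even_natCast_zmod_two heven]
        ring
      · exact absurd (trivial_repIso htrivb htriv₀ (by rw [hrkb, hrk₀])) (hdist b i₀ hbne)
    rw [h1, hrk₀]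
    decide
  rw [hnonfix, hfix, add_zero]
end

section
/- Let G be a finite group, F a field of characteristic 2, and V an FG-module affording a non-degenerate G-invariant alternating bilinear form B. Suppose V has no nonzero trivial quotient module. Then V affords at most one G-invariant quadratic form which polarizes to B. -/
open Module

/-- if V has no nonzero trivial quotient, a G-invariant quadratic form polarizing
to a given non-degenerate invariant alternating form B is unique. -/
theorem stmt_4 {F : Type} [Field F] [CharP F 2] {G : Type} [Group G] [Finite G]
    {V : Type} [AddCommGroup V] [Module F V]
    (ρ : Representation F G V) (B : V →ₗ[F] V →ₗ[F] F)
    (hBinv : BilinInvariant ρ B) (hBnd : Nondeg B) (hBalt : IsAltForm B)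
    (hnoquot : ∀ U : Submodule F V, IsSubrep ρ U →
      (∀ (g : G) (v : V), ρ g v - v ∈ U) → U = ⊤)
    (Q₁ Q₂ : V → F)
    (h₁ : PolarizesTo Q₁ B) (hi₁ : QuadInvariant ρ Q₁)
    (h₂ : PolarizesTo Q₂ B) (hi₂ : QuadInvariant ρ Q₂) :
    Q₁ = Q₂ := by
  have hQ0 : ∀ (Q : V → F), PolarizesTo Q B → Q 0 = 0 := by
    intro Q hQ
    have := hQ.1 0 0
    simpa using this
  set D : V → F := fun v => Q₁ v - Q₂ v with hD
  have Dadd : ∀ v w, D (v + w) = D v + D w := by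
    intro v w
    simp only [hD, h₁.2 v w, h₂.2 v w]; ring
  have Dsmul : ∀ (a : F) (v : V), D (a • v) = a ^ 2 * D v := by
    intro a v; simp only [hD, h₁.1 a v, h₂.1 a v]; ring
  have Dinv : ∀ (g : G) (v : V), D (ρ g v) = D v := by
    intro g v; simp only [hD, hi₁ g v, hi₂ g v]
  let K : Submodule F V :=
    { carrier := {v | D v = 0}
      add_mem' := by
        intro a b ha hb
        simp only [Set.mem_setOf_eq] at *
        rw [Dadd, ha, hb, add_zero]
      zero_mem' := by
        simp only [Set.mem_setOf_eq, hD]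
        rw [hQ0 Q₁ h₁, hQ0 Q₂ h₂, sub_zero]
      smul_mem' := by
        intro c x hx
        simp only [Set.mem_setOf_eq] at *
        rw [Dsmul, hx, mul_zero] }
  have hgen : ∀ (g : G) (v : V), ρ g v - v ∈ K := by
    intro g v
    show D (ρ g v - v) = 0
    have h : D (ρ g v) = D (ρ g v - v) + D v := by
      rw [← Dadd, sub_add_cancel]
    rw [Dinv] at h
    linear_combination -h
  have hsub : IsSubrep ρ K := by
    intro g v hv
    show D (ρ g v) = 0
    rw [Dinv]; exact hv
  have hK : K = ⊤ := hnoquot K hsub hgen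
  funext v
  have hv : v ∈ K := hK ▸ Submodule.mem_top
  have : Q₁ v - Q₂ v = 0 := hv
  exact sub_eq_zero.mp this
end

section
/- Let G be a finite group, F a field of characteristic 2, and let U, V be FG-modules affording non-degenerate G-invariant alternating bilinear forms B_U and B_V respectively. Then there exists a unique quadratic form Q on U ⊗_F V that polarizes to the form B_U ⊗ B_V and satisfies Q(u ⊗ v) = 0 for all u ∈ U, v ∈ V; moreover this Q is G-invariant. -/
open Module

open TensorProduct

section Aux
variable {F : Type} [Field F]
    {U V : Type} [AddCommGroup U] [Module F U] [AddCommGroup V] [Module F V]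

lemma bilin_tensor_ext (B₁ B₂ : (U ⊗[F] V) →ₗ[F] (U ⊗[F] V) →ₗ[F] F)
    (h : ∀ (u : U) (v : V) (u' : U) (v' : V),
      B₁ (u ⊗ₜ[F] v) (u' ⊗ₜ[F] v') = B₂ (u ⊗ₜ[F] v) (u' ⊗ₜ[F] v')) : B₁ = B₂ := by
  apply TensorProduct.ext'
  intro u v
  apply LinearMap.ext; intro z
  induction z using TensorProduct.induction_on with
  | zero => simp
  | tmul u' v' => exact h u v u' v'
  | add x y hx hy => simp [map_add, hx, hy]

lemma alt_symm [CharP F 2] (B : U →ₗ[F] U →ₗ[F] F) (hB : ∀ u, B u u = 0)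
    (u u' : U) : B u u' = B u' u := by
  have h := hB (u + u')
  simp [map_add, hB] at h
  rw [eq_neg_of_add_eq_zero_right h, CharTwo.neg_eq]

end Aux

section Main
variable {F : Type} [Field F] [CharP F 2]
    {U V : Type} [AddCommGroup U] [Module F U] [AddCommGroup V] [Module F V]

-- half form on U
noncomputable def halfForm (B : U →ₗ[F] U →ₗ[F] F) : U →ₗ[F] U →ₗ[F] F :=
  letI : LinearOrder (Basis.ofVectorSpaceIndex F U) := IsWellOrder.linearOrder WellOrderingRel
  (Basis.ofVectorSpace F U).constr F fun i =>
    (Basis.ofVectorSpace F U).constr F fun j =>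
      if i < j then B (Basis.ofVectorSpace F U i) (Basis.ofVectorSpace F U j) else 0

lemma halfForm_add_flip (B : U →ₗ[F] U →ₗ[F] F) (hB : ∀ u, B u u = 0) :
    halfForm B + (halfForm B).flip = B := by
  letI : LinearOrder (Basis.ofVectorSpaceIndex F U) := IsWellOrder.linearOrder WellOrderingRel
  set b := Basis.ofVectorSpace F U with hb
  apply b.ext; intro i
  apply b.ext; intro j
  have h1 : ∀ i j : (Basis.ofVectorSpaceIndex F U),
      halfForm B (b i) (b j) = if i < j then B (b i) (b j) else 0 := by
    intro i j
    rw [halfForm]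
    rw [Basis.constr_basis, Basis.constr_basis]
  simp only [LinearMap.add_apply, LinearMap.flip_apply, h1]
  rcases lt_trichotomy i j with h | h | h
  · rw [if_pos h, if_neg (not_lt.2 h.le), add_zero]
  · subst h; rw [if_neg (lt_irrefl i), hB, add_zero]
  · rw [if_neg (not_lt.2 h.le), if_pos h, zero_add]
    exact (alt_symm B hB _ _).symm

end Main

open TensorProduct in
/-- Sin–Willems: there is a unique quadratic form on U ⊗ V polarizing to
B_U ⊗ B_V and vanishing on pure tensors; moreover it is G-invariant. -/
theorem stmt_5 {F : Type} [Field F] [CharP F 2] {G : Type} [Group G] [Finite G]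
    {U V : Type} [AddCommGroup U] [Module F U] [AddCommGroup V] [Module F V]
    (ρU : Representation F G U) (ρV : Representation F G V)
    (BU : U →ₗ[F] U →ₗ[F] F) (BV : V →ₗ[F] V →ₗ[F] F)
    (hBU : BilinInvariant ρU BU ∧ Nondeg BU ∧ IsAltForm BU)
    (hBV : BilinInvariant ρV BV ∧ Nondeg BV ∧ IsAltForm BV)
    (T : (U ⊗[F] V) →ₗ[F] (U ⊗[F] V) →ₗ[F] F)
    (hT : ∀ (u u' : U) (v v' : V), T (u ⊗ₜ[F] v) (u' ⊗ₜ[F] v') = BU u u' * BV v v') :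
    ∃ Q : U ⊗[F] V → F,
      (PolarizesTo Q T ∧ (∀ (u : U) (v : V), Q (u ⊗ₜ[F] v) = 0) ∧
        QuadInvariant (ρU.tprod ρV) Q) ∧
      ∀ Q' : U ⊗[F] V → F,
        PolarizesTo Q' T → (∀ (u : U) (v : V), Q' (u ⊗ₜ[F] v) = 0) → Q' = Q := by
  obtain ⟨hUinv, hUnd, hUalt⟩ := hBU
  obtain ⟨hVinv, hVnd, hValt⟩ := hBV
  set BU' := halfForm BU with hBU'def
  have hkey := halfForm_add_flip BU hUalt
  set B' : (U ⊗[F] V) →ₗ[F] (U ⊗[F] V) →ₗ[F] F := LinearMap.BilinForm.tmul BU' BV with hB'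
  have hB'app : ∀ (u : U) (v : V) (u' : U) (v' : V),
      B' (u ⊗ₜ[F] v) (u' ⊗ₜ[F] v') = BV v v' * BU' u u' := by
    intro u v u' v'
    rw [hB']
    rw [LinearMap.BilinForm.tensorDistrib_tmul]
    simp [smul_eq_mul]
  set Q : U ⊗[F] V → F := fun x => B' x x with hQdef
  have hflip : (B' + B'.flip) = T := by
    apply bilin_tensor_ext
    intro u v u' v'
    simp only [LinearMap.add_apply, LinearMap.flip_apply, hB'app, hT]
    have hk := LinearMap.congr_fun (LinearMap.congr_fun hkey u) u'
    simp only [LinearMap.add_apply, LinearMap.flip_apply] at hk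
    rw [alt_symm BV hValt v' v, ← hk]
    ring
  have hpolar : PolarizesTo Q T := by
    constructor
    · intro a x
      simp only [hQdef, map_smul, LinearMap.smul_apply, smul_eq_mul]
      ring
    · intro x y
      have h := LinearMap.congr_fun (LinearMap.congr_fun hflip x) y
      simp only [LinearMap.add_apply, LinearMap.flip_apply] at h
      simp only [hQdef, map_add, LinearMap.add_apply]
      rw [← h]; ring
  have hpure : ∀ (u : U) (v : V), Q (u ⊗ₜ[F] v) = 0 := by
    intro u v
    show B' (u ⊗ₜ[F] v) (u ⊗ₜ[F] v) = 0
    rw [hB'app, hValt v, zero_mul]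
  have huniq : ∀ Q' : U ⊗[F] V → F,
      PolarizesTo Q' T → (∀ (u : U) (v : V), Q' (u ⊗ₜ[F] v) = 0) → Q' = Q := by
    intro Q' hP' h0'
    funext x
    induction x using TensorProduct.induction_on with
    | zero =>
        have h1 : Q (0 : U ⊗[F] V) = 0 := by simpa using hpure 0 0
        have h2 : Q' (0 : U ⊗[F] V) = 0 := by simpa using h0' 0 0
        rw [h1, h2]
    | tmul u v => rw [hpure, h0']
    | add x y hx hy => rw [hP'.2, hpolar.2, hx, hy]
  refine ⟨Q, ⟨hpolar, hpure, ?_⟩, huniq⟩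
  -- invariance
  intro g x
  have Tinv : ∀ y z, T ((ρU.tprod ρV) g y) ((ρU.tprod ρV) g z) = T y z := by
    have e : T.compl₁₂ ((ρU.tprod ρV) g) ((ρU.tprod ρV) g) = T := by
      apply bilin_tensor_ext
      intro u v u' v'
      simp only [LinearMap.compl₁₂_apply, Representation.tprod_apply, TensorProduct.map_tmul, hT]
      rw [hUinv, hVinv]
    intro y z
    have := LinearMap.congr_fun (LinearMap.congr_fun e y) z
    simpa using this
  have hQg := huniq (fun z => Q ((ρU.tprod ρV) g z)) ?_ ?_
  · exact congrFun hQg x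
  · constructor
    · intro a z; simp only [map_smul]; exact hpolar.1 a _
    · intro y z; simp only [map_add]; rw [hpolar.2, Tinv]
  · intro u v
    simp only [Representation.tprod_apply, TensorProduct.map_tmul]
    exact hpure _ _
end

section
/- Let G be a finite group, N a normal subgroup, F a perfect splitting field of characteristic 2, W a self-dual irreducible FN-module, and V a self-dual irreducible FG-module. If the multiplicity e of W as a composition factor of V↓_N satisfies e > 1, then e is even. -/
open Module

/-! ### Auxiliary lemmas -/

section Aux

variable {F : Type} [Field F]

/-- A nondegenerate alternating bilinear form forces even dimension. -/
private theorem alt_nondeg_even_aux_s9 (F : Type) [Field F] :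
    ∀ (n : ℕ) (E : Type) (_ : AddCommGroup E) (_ : Module F E) (_ : FiniteDimensional F E)
    (Λ : E →ₗ[F] E →ₗ[F] F) (_ : ∀ x, Λ x x = 0)
    (_ : ∀ x, (∀ y, Λ x y = 0) → x = 0), finrank F E = n → Even n := by
  intro n
  induction n using Nat.strong_induction_on with
  | _ n ih =>
    intro E _ _ _ Λ halt hnd hrk
    have hskew : ∀ x y : E, Λ x y = - Λ y x := by
      intro x y
      have h0 := halt (x + y)
      simp only [map_add, LinearMap.add_apply, halt x, halt y] at h0
      linear_combination h0
    by_cases hE : ∀ x : E, x = 0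
    · have : finrank F E = 0 := by
        have : (⊤ : Submodule F E) = ⊥ := by
          ext x; simp [hE x]
        rw [← finrank_top, this, finrank_bot]
      have hn0 : n = 0 := by omega
      simp [hn0]
    push_neg at hE
    obtain ⟨x, hx⟩ := hE
    have : ¬ (∀ y, Λ x y = 0) := fun hxy => hx (hnd x hxy)
    push_neg at this
    obtain ⟨y, hxy⟩ := this
    have hyx : Λ y x ≠ 0 := by rw [hskew y x]; simpa using hxy
    have hli : LinearIndependent F ![x, y] := by
      rw [LinearIndependent.pair_iff]
      intro s t hst
      have h1 : Λ x (s • x + t • y) = 0 := by rw [hst]; simp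
      have h2 : Λ y (s • x + t • y) = 0 := by rw [hst]; simp
      simp only [map_add, map_smul, smul_eq_mul, halt x, halt y, mul_zero, add_zero, zero_add] at h1 h2
      constructor
      · exact by
          rcases mul_eq_zero.mp h2 with h | h
          · exact h
          · exact absurd h hyx
      · rcases mul_eq_zero.mp h1 with h | h
        · exact h
        · exact absurd h hxy
    set P : Submodule F E := Submodule.span F {x, y} with hP
    set Q : Submodule F E := LinearMap.ker (Λ x) ⊓ LinearMap.ker (Λ y) with hQ
    have hPQbot : P ⊓ Q = ⊥ := by
      rw [Submodule.eq_bot_iff]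
      intro z hz
      rw [Submodule.mem_inf] at hz
      obtain ⟨hzP, hzQ⟩ := hz
      rw [hQ, Submodule.mem_inf, LinearMap.mem_ker, LinearMap.mem_ker] at hzQ
      rw [hP, Submodule.mem_span_pair] at hzP
      obtain ⟨a, b, rfl⟩ := hzP
      have h1 : Λ x (a • x + b • y) = 0 := hzQ.1
      have h2 : Λ y (a • x + b • y) = 0 := hzQ.2
      simp only [map_add, map_smul, smul_eq_mul, halt x, halt y, mul_zero, add_zero, zero_add] at h1 h2
      have hb : b = 0 := by rcases mul_eq_zero.mp h1 with h | h; exact h; exact absurd h hxy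
      have ha : a = 0 := by rcases mul_eq_zero.mp h2 with h | h; exact h; exact absurd h hyx
      simp [ha, hb]
    have hPQtop : P ⊔ Q = ⊤ := by
      rw [Submodule.eq_top_iff']
      intro v
      have hmem : v - ((Λ x v / Λ x y) • y + (Λ y v / Λ y x) • x) ∈ Q := by
        rw [hQ, Submodule.mem_inf, LinearMap.mem_ker, LinearMap.mem_ker]
        constructor
        · simp only [map_sub, map_add, map_smul, smul_eq_mul, halt x]
          field_simp
          ring
        · simp only [map_sub, map_add, map_smul, smul_eq_mul, halt y]
          field_simp
          ring
      have hp : ((Λ x v / Λ x y) • y + (Λ y v / Λ y x) • x) ∈ P := by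
        rw [hP, Submodule.mem_span_pair]
        exact ⟨Λ y v / Λ y x, Λ x v / Λ x y, add_comm _ _⟩
      have := Submodule.add_mem_sup hp hmem
      simpa using this
    have hrkP : finrank F P = 2 := by
      have := finrank_span_eq_card hli
      simp only [Fintype.card_fin] at this
      rw [hP]
      have hset : (Set.range ![x, y]) = {x, y} := by
        ext z
        simp only [Matrix.range_cons, Matrix.range_empty, Set.union_empty, Set.union_singleton,
          Set.mem_insert_iff, Set.mem_singleton_iff]
        tauto
      rw [← hset]
      exact this
    have hsum := Submodule.finrank_sup_add_finrank_inf_eq P Q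
    rw [hPQbot, hPQtop, finrank_bot, finrank_top, hrk, hrkP, add_zero] at hsum
    set Λ' : Q →ₗ[F] Q →ₗ[F] F := (Λ.compl₁₂ Q.subtype Q.subtype) with hΛ'
    have halt' : ∀ z : Q, Λ' z z = 0 := fun z => halt z
    have hnd' : ∀ z : Q, (∀ z' : Q, Λ' z z' = 0) → z = 0 := by
      intro z hz
      have hall : ∀ v : E, Λ z v = 0 := by
        intro v
        have hv : v ∈ P ⊔ Q := hPQtop ▸ Submodule.mem_top
        obtain ⟨p, hp, q, hq, rfl⟩ := Submodule.mem_sup.mp hv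
        rw [hP, Submodule.mem_span_pair] at hp
        obtain ⟨a, b, rfl⟩ := hp
        have hzx : Λ (z : E) x = 0 := by
          rw [hskew]
          have := (Submodule.mem_inf.mp z.2).1
          rw [LinearMap.mem_ker] at this
          simp [this]
        have hzy : Λ (z : E) y = 0 := by
          rw [hskew]
          have := (Submodule.mem_inf.mp z.2).2
          rw [LinearMap.mem_ker] at this
          simp [this]
        have hzq : Λ (z : E) q = 0 := hz ⟨q, hq⟩
        simp [map_add, map_smul, hzx, hzy, hzq]
      have := hnd z hall
      exact Subtype.ext this
    have hlt : finrank F ↥Q < n := by omega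
    have hQeven : Even (finrank F ↥Q) :=
      ih (finrank F ↥Q) hlt ↥Q inferInstance inferInstance inferInstance Λ' halt' hnd' rfl
    obtain ⟨m, hm⟩ := hQeven
    exact ⟨m + 1, by omega⟩

variable {G : Type} [Group G] {X : Type} [AddCommGroup X] [Module F X]

private theorem rep_mul_apply (τ : Representation F G X) (a b : G) (v : X) :
    τ a (τ b v) = τ (a * b) v := by rw [map_mul]; rfl

private theorem rep_inv_left (τ : Representation F G X) (g : G) (v : X) :
    τ g⁻¹ (τ g v) = v := by rw [rep_mul_apply, inv_mul_cancel, map_one]; rfl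

private theorem rep_inv_right (τ : Representation F G X) (g : G) (v : X) :
    τ g (τ g⁻¹ v) = v := by rw [rep_mul_apply, mul_inv_cancel, map_one]; rfl

private theorem form_inv (τ : Representation F G X) (e : X ≃ₗ[F] Module.Dual F X)
    (he : ∀ (g : G) (v : X), e (τ g v) = τ.dual g (e v)) :
    ∀ (g : G) (v w : X), e (τ g v) (τ g w) = e v w := by
  intro g v w
  rw [he]
  show e v (τ g⁻¹ (τ g w)) = e v w
  rw [rep_inv_left]

private theorem form_dual_symm (τ : Representation F G X) (e : X ≃ₗ[F] Module.Dual F X)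
    (he : ∀ (g : G) (v : X), e (τ g v) = τ.dual g (e v)) :
    ∀ (g : G) (ℓ : Module.Dual F X), e.symm (τ.dual g ℓ) = τ g (e.symm ℓ) := by
  intro g ℓ
  apply e.injective
  rw [e.apply_symm_apply, he, e.apply_symm_apply]

private theorem form_ne [Nontrivial X] (e : X ≃ₗ[F] Module.Dual F X) :
    ∃ v w : X, e v w ≠ 0 := by
  by_contra hno
  push_neg at hno
  obtain ⟨v, hv⟩ := exists_ne (0 : X)
  apply hv
  apply e.injective
  rw [map_zero]
  ext w
  exact hno v w

/-- symmetry of an invariant nondegenerate form in characteristic 2, given splitting. -/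
private theorem sym_of_selfdual [CharP F 2] (τ : Representation F G X)
    (e : X ≃ₗ[F] Module.Dual F X) (he : ∀ (g : G) (v : X), e (τ g v) = τ.dual g (e v))
    (hnt : Nontrivial X)
    (hsp : ∀ f : X →ₗ[F] X, (∀ (g : G) (v : X), f (τ g v) = τ g (f v)) →
      ∃ c : F, f = c • (LinearMap.id : X →ₗ[F] X)) :
    ∀ v w : X, e v w = e w v := by
  have hBinv := form_inv τ e he
  have hdual := form_dual_symm τ e he
  haveI := hnt
  have hBne := form_ne e
  set g₀ : X →ₗ[F] X := e.symm.toLinearMap ∘ₗ (e.toLinearMap : X →ₗ[F] X →ₗ[F] F).flip with hg₀def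
  have hg₀ : ∀ (g : G) (v : X), g₀ (τ g v) = τ g (g₀ v) := by
    intro g v
    have h1 : (e.toLinearMap : X →ₗ[F] X →ₗ[F] F).flip (τ g v)
        = τ.dual g ((e.toLinearMap : X →ₗ[F] X →ₗ[F] F).flip v) := by
      ext w
      show e w (τ g v) = e (τ g⁻¹ w) v
      conv_lhs => rw [← rep_inv_right τ g w]
      rw [hBinv g (τ g⁻¹ w) v]
    show e.symm ((e.toLinearMap : X →ₗ[F] X →ₗ[F] F).flip (τ g v))
        = τ g (e.symm ((e.toLinearMap : X →ₗ[F] X →ₗ[F] F).flip v))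
    rw [h1, hdual]
  obtain ⟨c, hc⟩ := hsp g₀ hg₀
  have hc' : ∀ v w : X, e w v = c * e v w := by
    intro v w
    have h3 : g₀ v = c • v := by rw [hc]; rfl
    have h2 : (e.toLinearMap : X →ₗ[F] X →ₗ[F] F).flip v = c • (e v) := by
      calc (e.toLinearMap : X →ₗ[F] X →ₗ[F] F).flip v
          = e (e.symm ((e.toLinearMap : X →ₗ[F] X →ₗ[F] F).flip v)) := (e.apply_symm_apply _).symm
        _ = e (c • v) := by rw [show e.symm ((e.toLinearMap : X →ₗ[F] X →ₗ[F] F).flip v) = c • v from h3]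
        _ = c • e v := map_smul _ _ _
    calc e w v = ((e.toLinearMap : X →ₗ[F] X →ₗ[F] F).flip v) w := rfl
      _ = (c • (e v)) w := by rw [h2]
      _ = c * e v w := rfl
  obtain ⟨v₀, w₀, hne⟩ := hBne
  have h2F : (2 : F) = 0 := by exact_mod_cast CharP.cast_eq_zero F 2
  have hcc : c * c = 1 := by
    have h5 : e v₀ w₀ = c * e w₀ v₀ := hc' w₀ v₀
    have h6 : e w₀ v₀ = c * e v₀ w₀ := hc' v₀ w₀
    rw [h6] at h5
    have h7 : (c * c - 1) * e v₀ w₀ = 0 := by linear_combination -h5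
    rcases mul_eq_zero.mp h7 with h | h
    · linear_combination h
    · exact absurd h hne
  have hc1 : c = 1 := by
    have h8 : (c + 1) * (c + 1) = 0 := by linear_combination hcc + c * h2F + h2F
    have h9 : c + 1 = 0 := by rcases mul_eq_zero.mp h8 with h | h <;> exact h
    linear_combination h9 - h2F
  intro v w
  rw [hc' w v, hc1, one_mul]

private def MinSubrep (τ : Representation F G X) (U : Submodule F X) : Prop :=
  IsSubrep τ U ∧ U ≠ ⊥ ∧ ∀ U' : Submodule F X, IsSubrep τ U' → U' ≤ U → U' = ⊥ ∨ U' = U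

private theorem exists_min_subrep [FiniteDimensional F X] (τ : Representation F G X) :
    ∀ (n : ℕ) (U : Submodule F X), IsSubrep τ U → U ≠ ⊥ → finrank F U = n →
      ∃ U₀, U₀ ≤ U ∧ MinSubrep τ U₀ := by
  intro n
  induction n using Nat.strong_induction_on with
  | _ n ih =>
    intro U hU hUne hrk
    by_cases hmin : ∀ U' : Submodule F X, IsSubrep τ U' → U' ≤ U → U' = ⊥ ∨ U' = U
    · exact ⟨U, le_refl U, hU, hUne, hmin⟩
    · push_neg at hmin
      obtain ⟨U', hU'sub, hU'le, hU'ne, hU'neU⟩ := hmin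
      have hlt : U' < U := lt_of_le_of_ne hU'le hU'neU
      have hfr : finrank F U' < n := hrk ▸ Submodule.finrank_lt_finrank_of_lt hlt
      obtain ⟨U₀, hle, hmin₀⟩ := ih _ hfr U' hU'sub hU'ne rfl
      exact ⟨U₀, le_trans hle hU'le, hmin₀⟩

end Aux

section Aux2

variable {F : Type} [Field F] {G : Type} [Group G]
variable {V : Type} [AddCommGroup V] [Module F V]

private theorem map_minsubrep (ρ : Representation F G V) (N : Subgroup G) [hN : N.Normal]
    (g : G) (U : Submodule F V) (hU : MinSubrep (ρ.comp N.subtype) U) :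
    MinSubrep (ρ.comp N.subtype) (Submodule.map (ρ g) U) := by
  obtain ⟨hUsub, hUne, hUmin⟩ := hU
  have hidm : ∀ (a : G) (U' : Submodule F V),
      Submodule.map (ρ a⁻¹) (Submodule.map (ρ a) U') = U' := by
    intro a U'
    rw [← Submodule.map_comp]
    have hcomp : (ρ a⁻¹).comp (ρ a) = LinearMap.id := by
      ext v
      exact rep_inv_left ρ a v
    rw [hcomp, Submodule.map_id]
  have hsubmap : ∀ (a : G) (U' : Submodule F V), IsSubrep (ρ.comp N.subtype) U' →
      IsSubrep (ρ.comp N.subtype) (Submodule.map (ρ a) U') := by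
    intro a U' hsub n v hv
    obtain ⟨u, hu, rfl⟩ := hv
    have hmem : a⁻¹ * ↑n * a ∈ N := by
      have := hN.conj_mem ↑n n.2 a⁻¹
      simpa using this
    refine ⟨(ρ.comp N.subtype) ⟨a⁻¹ * ↑n * a, hmem⟩ u, hsub _ u hu, ?_⟩
    show ρ a (ρ (a⁻¹ * ↑n * a) u) = ρ ↑n (ρ a u)
    have hgrp : a * (a⁻¹ * ↑n * a) = ↑n * a := by group
    rw [rep_mul_apply, hgrp, ← rep_mul_apply]
  refine ⟨hsubmap g U hUsub, ?_, ?_⟩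
  · obtain ⟨x, hx, hx0⟩ := (Submodule.ne_bot_iff U).mp hUne
    rw [Submodule.ne_bot_iff]
    refine ⟨ρ g x, ⟨x, hx, rfl⟩, fun h0 => hx0 ?_⟩
    have := congrArg (ρ g⁻¹) h0
    rwa [rep_inv_left, map_zero] at this
  · intro U' hU'sub hU'le
    have h1 : Submodule.map (ρ g⁻¹) U' ≤ U := by
      have := Submodule.map_mono (f := ρ g⁻¹) hU'le
      rwa [hidm g U] at this
    rcases hUmin _ (hsubmap g⁻¹ U' hU'sub) h1 with h | h
    · left
      have h2 := congrArg (Submodule.map (ρ g⁻¹⁻¹)) h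
      rw [hidm g⁻¹ U', Submodule.map_bot] at h2
      exact h2
    · right
      have h2 := congrArg (Submodule.map (ρ g⁻¹⁻¹)) h
      rw [hidm g⁻¹ U'] at h2
      simpa using h2

private theorem socle_eq_top [FiniteDimensional F V] (ρ : Representation F G V)
    (N : Subgroup G) [hN : N.Normal] (hirr : IsIrred ρ) :
    (⨆ U : {U : Submodule F V // MinSubrep (ρ.comp N.subtype) U}, U.1) = ⊤ := by
  set S := ⨆ U : {U : Submodule F V // MinSubrep (ρ.comp N.subtype) U}, U.1 with hS
  have hSsub : IsSubrep ρ S := by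
    intro g v hv
    refine Submodule.iSup_induction (motive := fun z => ρ g z ∈ S) _ hv (fun U x hx => ?_) ?_ (fun x y hx hy => ?_)
    · have hmm : ρ g x ∈ Submodule.map (ρ g) U.1 := ⟨x, hx, rfl⟩
      have hle : Submodule.map (ρ g) U.1 ≤ S := le_iSup
        (fun (U : {U : Submodule F V // MinSubrep (ρ.comp N.subtype) U}) => U.1)
        ⟨Submodule.map (ρ g) U.1, map_minsubrep ρ N g U.1 U.2⟩
      exact hle hmm
    · show ρ g 0 ∈ S
      rw [map_zero]; exact S.zero_mem
    · show ρ g (x + y) ∈ S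
      rw [map_add]; exact S.add_mem hx hy
  rcases hirr.2 S hSsub with h | h
  · exfalso
    haveI := hirr.1
    have htne : (⊤ : Submodule F V) ≠ ⊥ := by
      intro h0
      obtain ⟨v, hv⟩ := exists_ne (0 : V)
      apply hv
      have : v ∈ (⊤ : Submodule F V) := Submodule.mem_top
      rw [h0] at this
      simpa using this
    obtain ⟨U₀, hle, hmin⟩ := exists_min_subrep (ρ.comp N.subtype)
      (finrank F (⊤ : Submodule F V)) ⊤ (fun _ _ _ => Submodule.mem_top) htne rfl
    have hU₀S : U₀ ≤ S := le_iSup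
      (fun (U : {U : Submodule F V // MinSubrep (ρ.comp N.subtype) U}) => U.1) ⟨U₀, hmin⟩
    rw [h] at hU₀S
    exact hmin.2.1 (le_bot_iff.mp hU₀S)
  · exact h

end Aux2

set_option maxHeartbeats 2000000 in
set_option synthInstance.maxHeartbeats 400000 in
/-- if a self-dual irreducible FN-module W occurs with multiplicity e > 1 in the
restriction of a self-dual irreducible FG-module, then e is even. -/
theorem stmt_9 {F : Type} [Field F] [CharP F 2] [PerfectField F]
    {G : Type} [Group G] [Finite G] (N : Subgroup G) [N.Normal]
    (hsplit : ∀ H : Subgroup G, IsSplitting F ↥H)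
    {V : Type} [AddCommGroup V] [Module F V] [FiniteDimensional F V]
    (ρ : Representation F G V) (hirrV : IsIrred ρ) (hsdV : IsSelfDual ρ)
    {W : Type} [AddCommGroup W] [Module F W] [FiniteDimensional F W]
    (σ : Representation F ↥N W) (hirrW : IsIrred σ) (hsdW : IsSelfDual σ)
    (h : 1 < repMult σ (ρ.comp N.subtype)) :
    Even (repMult σ (ρ.comp N.subtype)) := by
  classical
  obtain ⟨eV, heV⟩ := hsdV
  obtain ⟨eW, heW⟩ := hsdW
  haveI hntV : Nontrivial V := hirrV.1
  haveI hntW : Nontrivial W := hirrW.1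
  have hBinv := form_inv ρ eV heV
  have hbinv := form_inv σ eW heW
  have hdualW := form_dual_symm σ eW heW
  have hbne := form_ne eW
  have h2F : (2 : F) = 0 := by exact_mod_cast CharP.cast_eq_zero F 2
  -- splitting for G and N
  have splitG : ∀ f : V →ₗ[F] V, (∀ (g : G) (v : V), f (ρ g v) = ρ g (f v)) →
      ∃ c : F, f = c • (LinearMap.id : V →ₗ[F] V) := by
    intro f hf
    have h1 : IsIrred (ρ.comp (⊤ : Subgroup G).subtype) :=
      ⟨hirrV.1, fun U hU => hirrV.2 U (fun g v hv => hU ⟨g, trivial⟩ v hv)⟩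
    exact hsplit ⊤ V (ρ.comp (⊤ : Subgroup G).subtype) inferInstance h1 f
      (fun g w => hf (↑g) w)
  have splitN : ∀ f : W →ₗ[F] W, (∀ (n : ↥N) (w : W), f (σ n w) = σ n (f w)) →
      ∃ c : F, f = c • (LinearMap.id : W →ₗ[F] W) :=
    fun f hf => hsplit N W σ inferInstance hirrW f hf
  have hBsym : ∀ v w : V, eV v w = eV w v := sym_of_selfdual ρ eV heV hirrV.1 splitG
  have hbsym : ∀ v w : W, eW v w = eW w v := sym_of_selfdual σ eW heW hirrW.1 splitN
  set E := EquivHom σ (ρ.comp N.subtype) with hEdef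
  have hmemE : ∀ (f : W →ₗ[F] V), f ∈ E ↔
      ∀ (n : ↥N) (w : W), f (σ n w) = ρ (↑n) (f w) := fun f => Iff.rfl
  -- existence of the scalar for each pair of intertwiners
  have hlamEx : ∀ (f f' : W →ₗ[F] V), f ∈ E → f' ∈ E →
      ∃ c : F, ∀ w w' : W, eV (f w) (f' w') = c * eW w w' := by
    intro f f' hf hf'
    rw [hmemE] at hf hf'
    set D : W →ₗ[F] Module.Dual F W :=
      (((eV.toLinearMap ∘ₗ f : W →ₗ[F] Module.Dual F V) : W →ₗ[F] V →ₗ[F] F).flip ∘ₗ f').flip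
      with hD
    have hDapp : ∀ w w' : W, D w w' = eV (f w) (f' w') := fun w w' => rfl
    have hDcomm : ∀ (n : ↥N) (w : W), D (σ n w) = σ.dual n (D w) := by
      intro n w
      ext w'
      show eV (f (σ n w)) (f' w') = D w (σ n⁻¹ w')
      rw [hf n w]
      show eV (ρ ↑n (f w)) (f' w') = eV (f w) (f' (σ n⁻¹ w'))
      rw [hf' n⁻¹ w']
      have hcoe : ((n⁻¹ : ↥N) : G) = ((n : G))⁻¹ := rfl
      rw [hcoe]
      have h3 := hBinv (↑n) (f w) (ρ ((n : G))⁻¹ (f' w'))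
      rw [rep_inv_right] at h3
      exact h3
    set θ : W →ₗ[F] W := eW.symm.toLinearMap ∘ₗ D with hθ
    have hθcomm : ∀ (n : ↥N) (w : W), θ (σ n w) = σ n (θ w) := by
      intro n w
      show eW.symm (D (σ n w)) = σ n (eW.symm (D w))
      rw [hDcomm, hdualW]
    obtain ⟨c, hc⟩ := splitN θ hθcomm
    refine ⟨c, fun w w' => ?_⟩
    have h4 : θ w = c • w := by rw [hc]; rfl
    have h5 : D w = c • eW w := by
      calc D w = eW (eW.symm (D w)) := (eW.apply_symm_apply _).symm
        _ = eW (c • w) := by rw [show eW.symm (D w) = c • w from h4]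
        _ = c • eW w := map_smul _ _ _
    calc eV (f w) (f' w') = D w w' := rfl
      _ = (c • eW w) w' := by rw [h5]
      _ = c * eW w w' := rfl
  have hcUniq : ∀ c₁ c₂ : F, (∀ w w' : W, c₁ * eW w w' = c₂ * eW w w') → c₁ = c₂ := by
    intro c₁ c₂ hcc
    obtain ⟨w, w', hne⟩ := hbne
    have h6 := hcc w w'
    have h7 : (c₁ - c₂) * eW w w' = 0 := by linear_combination h6
    rcases mul_eq_zero.mp h7 with h8 | h8
    · linear_combination h8
    · exact absurd h8 hne
  set lam : ↥E → ↥E → F := fun f f' => (hlamEx f.1 f'.1 f.2 f'.2).choose with hlam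
  have lamSpec : ∀ (f f' : ↥E) (w w' : W), eV (f.1 w) (f'.1 w') = lam f f' * eW w w' :=
    fun f f' => (hlamEx f.1 f'.1 f.2 f'.2).choose_spec
  have lamEq : ∀ (f f' : ↥E) (c : F),
      (∀ w w' : W, eV (f.1 w) (f'.1 w') = c * eW w w') → lam f f' = c := by
    intro f f' c hcform
    refine hcUniq _ _ (fun w w' => ?_)
    rw [← lamSpec f f' w w', hcform w w']
  have lamAddL : ∀ (f g f' : ↥E), lam (f + g) f' = lam f f' + lam g f' := by
    intro f g f'
    refine lamEq _ _ _ (fun w w' => ?_)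
    have h6 : ((f + g) : ↥E).1 w = f.1 w + g.1 w := rfl
    rw [h6, map_add, LinearMap.add_apply, lamSpec f f' w w', lamSpec g f' w w']
    ring
  have lamSmulL : ∀ (c : F) (f f' : ↥E), lam (c • f) f' = c • lam f f' := by
    intro c f f'
    refine lamEq _ _ _ (fun w w' => ?_)
    have h6 : ((c • f) : ↥E).1 w = c • (f.1 w) := rfl
    rw [h6, map_smul, LinearMap.smul_apply, lamSpec f f' w w']
    simp [smul_eq_mul]
    ring
  have lamAddR : ∀ (f f' g' : ↥E), lam f (f' + g') = lam f f' + lam f g' := by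
    intro f f' g'
    refine lamEq _ _ _ (fun w w' => ?_)
    have h6 : ((f' + g') : ↥E).1 w' = f'.1 w' + g'.1 w' := rfl
    rw [h6, map_add, lamSpec f f' w w', lamSpec f g' w w']
    ring
  have lamSmulR : ∀ (c : F) (f f' : ↥E), lam f (c • f') = c • lam f f' := by
    intro c f f'
    refine lamEq _ _ _ (fun w w' => ?_)
    have h6 : ((c • f') : ↥E).1 w' = c • (f'.1 w') := rfl
    rw [h6, map_smul, lamSpec f f' w w']
    simp [smul_eq_mul]
    ring
  set Λ : ↥E →ₗ[F] ↥E →ₗ[F] F :=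
    LinearMap.mk₂ F lam lamAddL lamSmulL lamAddR lamSmulR with hΛdef
  have hΛapp : ∀ f f' : ↥E, Λ f f' = lam f f' := fun f f' => rfl
  have lamSym : ∀ f f' : ↥E, lam f f' = lam f' f := by
    intro f f'
    have h9 : ∀ w w' : W, eV (f'.1 w) (f.1 w') = lam f f' * eW w w' := by
      intro w w'
      rw [hBsym, lamSpec f f' w' w, hbsym w' w]
    exact (lamEq f' f _ h9).symm
  -- nondegeneracy of lam
  have lamNd : ∀ f : ↥E, (∀ f' : ↥E, lam f f' = 0) → f = 0 := by
    intro f hf0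
    have hforms : ∀ (f' : W →ₗ[F] V), f' ∈ E → ∀ (w w' : W), eV (f.1 w) (f' w') = 0 := by
      intro f' hf' w w'
      have h10 := lamSpec f ⟨f', hf'⟩ w w'
      rw [hf0 ⟨f', hf'⟩, zero_mul] at h10
      exact h10
    set Z : Submodule F V := ⨅ w : W, LinearMap.ker (eV (f.1 w)) with hZ
    have hZmem : ∀ v : V, v ∈ Z ↔ ∀ w : W, eV (f.1 w) v = 0 := by
      intro v
      simp [hZ, Submodule.mem_iInf, LinearMap.mem_ker]
    have hminZ : ∀ U : Submodule F V, MinSubrep (ρ.comp N.subtype) U → U ≤ Z := by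
      intro U hU
      obtain ⟨hUsub, hUne, hUmin⟩ := hU
      by_cases hth0 : ∀ u ∈ U, ∀ w : W, eV (f.1 w) u = 0
      · intro u hu
        rw [hZmem]
        exact fun w => hth0 u hu w
      · exfalso
        push_neg at hth0
        obtain ⟨u₁, hu₁U, w₁, hw₁⟩ := hth0
        set θ : ↥U →ₗ[F] Module.Dual F W :=
          ((eV.toLinearMap ∘ₗ f.1 : W →ₗ[F] V →ₗ[F] F).flip) ∘ₗ U.subtype with hθdef
        have hθapp : ∀ (u : ↥U) (w : W), θ u w = eV (f.1 w) ↑u := fun u w => rfl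
        have hθne : θ ≠ 0 := by
          intro h0
          apply hw₁
          rw [← hθapp ⟨u₁, hu₁U⟩ w₁, h0]
          rfl
        have hθcomm : ∀ (n : ↥N) (u : ↥U),
            θ ⟨ρ ↑n ↑u, hUsub n ↑u u.2⟩ = σ.dual n (θ u) := by
          intro n u
          ext w
          show eV (f.1 w) (ρ ↑n ↑u) = θ u (σ n⁻¹ w)
          show eV (f.1 w) (ρ ↑n ↑u) = eV (f.1 (σ n⁻¹ w)) ↑u
          have hf1 : f.1 (σ n⁻¹ w) = ρ ((n : G))⁻¹ (f.1 w) := (hmemE f.1).mp f.2 n⁻¹ w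
          rw [hf1]
          have h3 := hBinv (↑n) (ρ ((n : G))⁻¹ (f.1 w)) ↑u
          rw [rep_inv_right] at h3
          exact h3
        have hker : LinearMap.ker θ = ⊥ := by
          have hmap : IsSubrep (ρ.comp N.subtype)
              (Submodule.map U.subtype (LinearMap.ker θ)) := by
            intro n v hv
            obtain ⟨u, hu, rfl⟩ := hv
            refine ⟨⟨ρ ↑n ↑u, hUsub n ↑u u.2⟩, ?_, rfl⟩
            simp only [SetLike.mem_coe, LinearMap.mem_ker] at hu ⊢
            rw [hθcomm n u, hu]
            exact map_zero _
          have hle : Submodule.map U.subtype (LinearMap.ker θ) ≤ U := by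
            rintro v ⟨u, hu, rfl⟩
            exact u.2
          rcases hUmin _ hmap hle with h12 | h12
          · rw [Submodule.eq_bot_iff]
            intro u hu
            have h13 : (↑u : V) ∈ Submodule.map U.subtype (LinearMap.ker θ) := ⟨u, hu, rfl⟩
            rw [h12] at h13
            exact Subtype.ext (by simpa using h13)
          · exfalso
            apply hθne
            refine LinearMap.ext (fun u => ?_)
            have h13 : (↑u : V) ∈ Submodule.map U.subtype (LinearMap.ker θ) := by
              rw [h12]; exact u.2
            obtain ⟨u', hu', hu'e⟩ := h13
            have h14 : u' = u := Subtype.ext hu'e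
            rw [← h14]
            simp only [SetLike.mem_coe, LinearMap.mem_ker] at hu'
            rw [hu']
            rfl
        have hinj : Function.Injective θ := LinearMap.ker_eq_bot.mp hker
        have hrange : LinearMap.range θ = ⊤ := by
          have hsubT : IsSubrep σ.dual (LinearMap.range θ) := by
            intro n ℓ hℓ
            obtain ⟨u, rfl⟩ := hℓ
            exact ⟨⟨ρ ↑n ↑u, hUsub n ↑u u.2⟩, hθcomm n u⟩
          have hdirr : ∀ T : Submodule F (Module.Dual F W), IsSubrep σ.dual T →
              T = ⊥ ∨ T = ⊤ := by
            intro T hT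
            have hU' : IsSubrep σ (Submodule.map eW.symm.toLinearMap T) := by
              intro n x hx
              obtain ⟨ℓ, hℓ, rfl⟩ := hx
              exact ⟨σ.dual n ℓ, hT n ℓ hℓ, hdualW n ℓ⟩
            rcases hirrW.2 _ hU' with h12 | h12
            · left
              rw [Submodule.eq_bot_iff]
              intro ℓ hℓ
              have h13 : eW.symm ℓ ∈ Submodule.map eW.symm.toLinearMap T := ⟨ℓ, hℓ, rfl⟩
              rw [h12] at h13
              have h14 : eW.symm ℓ = 0 := by simpa using h13
              have h15 := congrArg eW h14
              rwa [eW.apply_symm_apply, map_zero] at h15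
            · right
              rw [Submodule.eq_top_iff']
              intro ℓ
              have h13 : eW.symm ℓ ∈ Submodule.map eW.symm.toLinearMap T :=
                h12 ▸ Submodule.mem_top
              obtain ⟨ℓ', hℓ', he'⟩ := h13
              have h14 : ℓ' = ℓ := eW.symm.injective he'
              rwa [← h14]
          rcases hdirr _ hsubT with h12 | h12
          · exact absurd (LinearMap.range_eq_bot.mp h12) hθne
          · exact h12
        have hsurj : Function.Surjective θ := LinearMap.range_eq_top.mp hrange
        set θe : ↥U ≃ₗ[F] Module.Dual F W := LinearEquiv.ofBijective θ ⟨hinj, hsurj⟩ with hθe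
        have hθeapp : ∀ u : ↥U, θe u = θ u := fun u => rfl
        have hθesymm : ∀ (n : ↥N) (ℓ : Module.Dual F W),
            θe.symm (σ.dual n ℓ) = ⟨ρ ↑n ↑(θe.symm ℓ), hUsub n _ (θe.symm ℓ).2⟩ := by
          intro n ℓ
          apply θe.injective
          rw [θe.apply_symm_apply]
          have h16 : θe ⟨ρ ↑n ↑(θe.symm ℓ), hUsub n _ (θe.symm ℓ).2⟩
              = θ ⟨ρ ↑n ↑(θe.symm ℓ), hUsub n _ (θe.symm ℓ).2⟩ := rfl
          rw [h16, hθcomm n (θe.symm ℓ)]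
          have h17 : θ (θe.symm ℓ) = θe (θe.symm ℓ) := rfl
          rw [h17, θe.apply_symm_apply]
        set f' : W →ₗ[F] V := U.subtype ∘ₗ (θe.symm.toLinearMap ∘ₗ eW.toLinearMap)
          with hf'def
        have hf'app : ∀ w : W, f' w = ↑(θe.symm (eW w)) := fun w => rfl
        have hf'mem : f' ∈ E := by
          rw [hmemE]
          intro n w
          rw [hf'app, hf'app, heW n w, hθesymm n (eW w)]
        obtain ⟨wa, wb, hwab⟩ := hbne
        have h7 := hforms f' hf'mem wb wa
        rw [hf'app] at h7
        have h8 : eV (f.1 wb) ↑(θe.symm (eW wa)) = θ (θe.symm (eW wa)) wb := rfl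
        rw [h8] at h7
        have h9 : θ (θe.symm (eW wa)) = eW wa := θe.apply_symm_apply (eW wa)
        rw [h9] at h7
        rw [hbsym wa wb] at h7
        exact hwab (by rw [hbsym wa wb]; exact h7)
    have hZtop : Z = ⊤ := by
      have hs := socle_eq_top ρ N hirrV
      exact top_unique (hs ▸ iSup_le (fun U => hminZ U.1 U.2))
    have hfv : ∀ w : W, f.1 w = 0 := by
      intro w
      have hall : ∀ v : V, eV (f.1 w) v = 0 :=
        fun v => (hZmem v).mp (hZtop ▸ Submodule.mem_top) w
      apply eV.injective
      rw [map_zero]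
      exact LinearMap.ext hall
    exact Subtype.ext (LinearMap.ext hfv)
  by_cases haltc : ∀ f : ↥E, lam f f = 0
  · have heven := alt_nondeg_even_aux_s9 F (finrank F ↥E) ↥E inferInstance inferInstance
      inferInstance Λ (fun x => haltc x) (fun x hx => lamNd x (fun f' => hx f')) rfl
    show Even (finrank F ↥(EquivHom σ (ρ.comp N.subtype)))
    rw [← hEdef]
    exact heven
  · exfalso
    push_neg at haltc
    obtain ⟨f₀, hf₀⟩ := haltc
    have he2 : 1 < finrank F ↥E := h
    have hf₀ne : f₀ ≠ 0 := by
      intro h0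
      apply hf₀
      rw [h0, ← hΛapp]
      simp
    -- the kernel of the quadratic map is a subspace
    have hq_add : ∀ a b : ↥E, lam a a = 0 → lam b b = 0 → lam (a + b) (a + b) = 0 := by
      intro a b ha hb
      have hexp : lam (a + b) (a + b) = lam a a + lam a b + (lam b a + lam b b) := by
        rw [lamAddL, lamAddR, lamAddR]
      rw [hexp, ha, hb, lamSym b a]
      linear_combination (lam a b) * h2F
    set K : Submodule F ↥E :=
      { carrier := {k : ↥E | lam k k = 0}
        add_mem' := fun ha hb => hq_add _ _ ha hb
        zero_mem' := by
          show lam 0 0 = 0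
          rw [← hΛapp]
          simp
        smul_mem' := by
          intro c x hx
          show lam (c • x) (c • x) = 0
          rw [lamSmulL, lamSmulR]
          have hxx : lam x x = 0 := hx
          rw [hxx]
          simp } with hK
    have hKmem : ∀ k : ↥E, k ∈ K ↔ lam k k = 0 := fun k => Iff.rfl
    have hKne : K ≠ ⊤ := by
      intro h0
      exact hf₀ ((hKmem f₀).mp (by rw [h0]; exact Submodule.mem_top))
    have hfrob : ∀ y : F, ∃ s : F, s * s = y := by
      intro y
      obtain ⟨s, hs⟩ := surjective_frobenius F 2 y
      refine ⟨s, ?_⟩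
      rw [← hs]
      show s * s = s ^ 2
      ring
    have hdecomp : ∀ x : ↥E, ∃ k ∈ K, ∃ t : F, x = k + t • f₀ := by
      intro x
      obtain ⟨s, hs⟩ := hfrob (lam x x / lam f₀ f₀)
      refine ⟨x - s • f₀, ?_, s, by abel⟩
      rw [hKmem]
      have hexp : lam (x - s • f₀) (x - s • f₀)
          = lam x x - s * lam x f₀ - (s * lam f₀ x - s * (s * lam f₀ f₀)) := by
        rw [← hΛapp]
        simp only [map_sub, map_smul, LinearMap.sub_apply, LinearMap.smul_apply,
          smul_eq_mul, hΛapp]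
        ring
      rw [hexp, lamSym f₀ x]
      have h10 : s * s * lam f₀ f₀ = lam x x := by
        rw [hs]
        field_simp
      linear_combination h10 + (lam x x - s * lam x f₀) * h2F
    have hrankK : finrank F ↥E ≤ finrank F ↥K + 1 := by
      have hsup : K ⊔ Submodule.span F {f₀} = ⊤ := by
        rw [Submodule.eq_top_iff']
        intro x
        obtain ⟨k, hk, t, rfl⟩ := hdecomp x
        exact Submodule.add_mem_sup hk
          (Submodule.smul_mem _ t (Submodule.mem_span_singleton_self f₀))
      have hsum := Submodule.finrank_sup_add_finrank_inf_eq K (Submodule.span F {f₀})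
      rw [hsup, finrank_top, finrank_span_singleton hf₀ne] at hsum
      omega
    have hKnebot : K ≠ ⊥ := by
      intro h0
      rw [h0, finrank_bot] at hrankK
      omega
    -- a nonzero vector orthogonal to K
    have hΦex : ∃ hv : ↥E, hv ≠ 0 ∧ ∀ k : ↥E, k ∈ K → lam hv k = 0 := by
      have hrefl : (Λ : LinearMap.BilinForm F ↥E).IsRefl := by
        intro x y hxy
        rw [hΛapp] at hxy ⊢
        rw [lamSym]
        exact hxy
      have hcard := LinearMap.BilinForm.finrank_add_finrank_orthogonal hrefl K
      have h13 : finrank F ↥K < finrank F ↥E :=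
        Submodule.finrank_lt hKne
      have horthne : LinearMap.BilinForm.orthogonal Λ K ≠ ⊥ := by
        intro h0
        rw [h0, finrank_bot, add_zero] at hcard
        omega
      obtain ⟨hv, hvmem, hvne⟩ := (Submodule.ne_bot_iff _).mp horthne
      refine ⟨hv, hvne, fun k hk => ?_⟩
      have h14 : Λ k hv = 0 := hvmem k hk
      rw [hΛapp] at h14
      rw [lamSym]
      exact h14
    obtain ⟨hv, hvne, hvperp⟩ := hΦex
    -- the G-span of images of K
    set Sgen : Set V := {v | ∃ (g : G) (k : ↥E), k ∈ K ∧ ∃ w : W, v = ρ g (k.1 w)}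
      with hSgen
    set V₀ : Submodule F V := Submodule.span F Sgen with hV₀
    have hV₀sub : IsSubrep ρ V₀ := by
      intro g v hv2
      induction hv2 using Submodule.span_induction with
      | mem x hx =>
        obtain ⟨g', k, hk, w, rfl⟩ := hx
        exact Submodule.subset_span ⟨g * g', k, hk, w, rep_mul_apply ρ g g' (k.1 w)⟩
      | zero => rw [map_zero]; exact V₀.zero_mem
      | add x y hx hy ihx ihy => rw [map_add]; exact V₀.add_mem ihx ihy
      | smul a x hx ihx => rw [map_smul]; exact V₀.smul_mem a ihx
    have hV₀top : V₀ = ⊤ := by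
      rcases hirrV.2 V₀ hV₀sub with h0 | h0
      · exfalso
        obtain ⟨k, hkK, hkne⟩ := (Submodule.ne_bot_iff K).mp hKnebot
        have hk1 : k.1 ≠ 0 := fun hh => hkne (Subtype.ext hh)
        have hkw : ∃ w : W, k.1 w ≠ 0 := by
          by_contra hall
          push_neg at hall
          exact hk1 (LinearMap.ext hall)
        obtain ⟨w, hw⟩ := hkw
        have hmem2 : k.1 w ∈ V₀ := Submodule.subset_span ⟨1, k, hkK, w, by rw [map_one]; rfl⟩
        rw [h0] at hmem2
        exact hw ((Submodule.mem_bot F).mp hmem2)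
      · exact h0
    -- key orthogonality
    have hkey : ∀ (g : G) (k : ↥E), k ∈ K → ∀ (w w' : W),
        eV (hv.1 w) (ρ g (k.1 w')) = 0 := by
      intro g k hkK w w'
      set C : W →ₗ[F] W →ₗ[F] F :=
        (((eV.toLinearMap ∘ₗ hv.1 : W →ₗ[F] V →ₗ[F] F).flip) ∘ₗ (ρ g ∘ₗ k.1)).flip with hCdef
      have hCapp : ∀ a b : W, C a b = eV (hv.1 a) (ρ g (k.1 b)) := fun a b => rfl
      suffices hCzero : C = 0 by
        rw [← hCapp w w', hCzero]
        rfl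
      by_contra hC0
      have hconj : ∀ n : ↥N, (g * ↑n * g⁻¹) ∈ N :=
        fun n => ‹N.Normal›.conj_mem ↑n n.2 g
      have hconj' : ∀ n : ↥N, (g⁻¹ * ↑n * g) ∈ N := by
        intro n
        have h20 := ‹N.Normal›.conj_mem ↑n n.2 g⁻¹
        simpa using h20
      have hCinv : ∀ (n : ↥N) (a b : W),
          C (σ ⟨g * ↑n * g⁻¹, hconj n⟩ a) (σ n b) = C a b := by
        intro n a b
        rw [hCapp, hCapp]
        rw [(hmemE hv.1).mp hv.2 ⟨g * ↑n * g⁻¹, hconj n⟩ a]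
        rw [(hmemE k.1).mp k.2 n b]
        rw [rep_mul_apply ρ g ↑n (k.1 b)]
        show eV (ρ (g * ↑n * g⁻¹) (hv.1 a)) (ρ (g * ↑n) (k.1 b))
            = eV (hv.1 a) (ρ g (k.1 b))
        have h25 : ρ (g * ↑n) (k.1 b) = ρ (g * ↑n * g⁻¹) (ρ g (k.1 b)) := by
          rw [rep_mul_apply ρ (g * ↑n * g⁻¹) g (k.1 b)]
          have h26 : (g * (n : G) : G) = g * ↑n * g⁻¹ * g := by group
          rw [← h26]
        rw [h25]
        exact hBinv (g * ↑n * g⁻¹) (hv.1 a) (ρ g (k.1 b))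
      have hLsub : IsSubrep σ (LinearMap.ker C) := by
        intro m a ha
        rw [LinearMap.mem_ker] at ha ⊢
        ext b
        set n : ↥N := ⟨g⁻¹ * ↑m * g, hconj' m⟩ with hn
        have hm : (⟨g * ↑n * g⁻¹, hconj n⟩ : ↥N) = m := by
          apply Subtype.ext
          show g * (g⁻¹ * ↑m * g) * g⁻¹ = ↑m
          group
        have h21 := hCinv n a (σ n⁻¹ b)
        rw [hm] at h21
        rw [rep_inv_right σ n b] at h21
        rw [h21, ha]
        rfl
      rcases hirrW.2 _ hLsub with hL | hL
      swap
      · apply hC0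
        ext a b
        have h22 : a ∈ LinearMap.ker C := by rw [hL]; exact Submodule.mem_top
        rw [LinearMap.mem_ker] at h22
        rw [h22]
        rfl
      have hinjC : Function.Injective C := LinearMap.ker_eq_bot.mp hL
      have hsurjC : Function.Surjective C :=
        (LinearMap.injective_iff_surjective_of_finrank_eq_finrank
          (Subspace.dual_finrank_eq).symm).mp hinjC
      set Ce : W ≃ₗ[F] Module.Dual F W := LinearEquiv.ofBijective C ⟨hinjC, hsurjC⟩ with hCe
      have hCeapp : ∀ a : W, Ce a = C a := fun a => rfl
      have hCcomm : ∀ (n : ↥N) (a : W),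
          C (σ ⟨g * ↑n * g⁻¹, hconj n⟩ a) = σ.dual n (C a) := by
        intro n a
        ext b
        show C (σ ⟨g * ↑n * g⁻¹, hconj n⟩ a) b = (C a) (σ n⁻¹ b)
        have h21 := hCinv n a (σ n⁻¹ b)
        rw [rep_inv_right σ n b] at h21
        exact h21
      set φe : W ≃ₗ[F] W := eW.trans Ce.symm with hφe
      have hφeapp : ∀ a : W, φe a = Ce.symm (eW a) := fun a => rfl
      have hφcomm : ∀ (n : ↥N) (a : W),
          φe (σ n a) = σ ⟨g * ↑n * g⁻¹, hconj n⟩ (φe a) := by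
        intro n a
        apply Ce.injective
        rw [hφeapp]
        rw [Ce.apply_symm_apply]
        have h23 : Ce (σ ⟨g * ↑n * g⁻¹, hconj n⟩ (φe a))
            = C (σ ⟨g * ↑n * g⁻¹, hconj n⟩ (φe a)) := rfl
        rw [h23, hCcomm n (φe a)]
        have h24 : C (φe a) = Ce (φe a) := rfl
        rw [h24, hφeapp, Ce.apply_symm_apply, heW n a]
      have hφsymm : ∀ (m : ↥N) (a : W),
          φe.symm (σ m a) = σ ⟨g⁻¹ * ↑m * g, hconj' m⟩ (φe.symm a) := by
        intro m a
        set n : ↥N := ⟨g⁻¹ * ↑m * g, hconj' m⟩ with hn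
        have hm : (⟨g * ↑n * g⁻¹, hconj n⟩ : ↥N) = m := by
          apply Subtype.ext
          show g * (g⁻¹ * ↑m * g) * g⁻¹ = ↑m
          group
        apply φe.injective
        rw [φe.apply_symm_apply, hφcomm n (φe.symm a), hm, φe.apply_symm_apply]
      set f'map : W →ₗ[F] V := (ρ g ∘ₗ k.1) ∘ₗ (φe.symm : W ≃ₗ[F] W).toLinearMap with hf'm
      have hf'app : ∀ a : W, f'map a = ρ g (k.1 (φe.symm a)) := fun a => rfl
      have hf'mem : f'map ∈ E := by
        rw [hmemE]
        intro m a
        rw [hf'app, hf'app, hφsymm m a]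
        rw [(hmemE k.1).mp k.2 ⟨g⁻¹ * ↑m * g, hconj' m⟩ (φe.symm a)]
        rw [rep_mul_apply ρ g (g⁻¹ * ↑m * g) (k.1 (φe.symm a))]
        have hgg : (g * (g⁻¹ * (m : G) * g) : G) = ↑m * g := by group
        rw [hgg, ← rep_mul_apply ρ (↑m) g (k.1 (φe.symm a))]
      have hf'K : (⟨f'map, hf'mem⟩ : ↥E) ∈ K := by
        rw [hKmem]
        refine lamEq _ _ 0 (fun a b => ?_)
        rw [zero_mul]
        show eV (f'map a) (f'map b) = 0
        rw [hf'app, hf'app]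
        rw [hBinv g (k.1 (φe.symm a)) (k.1 (φe.symm b))]
        rw [lamSpec k k (φe.symm a) (φe.symm b)]
        rw [(hKmem k).mp hkK, zero_mul]
      have hlam0 : lam hv ⟨f'map, hf'mem⟩ = 0 := hvperp _ hf'K
      apply hC0
      ext a b
      obtain ⟨b', hb'⟩ : ∃ b', φe.symm b' = b := ⟨φe b, φe.symm_apply_apply b⟩
      have h14 := lamSpec hv ⟨f'map, hf'mem⟩ a b'
      rw [hlam0, zero_mul] at h14
      have h15 : (⟨f'map, hf'mem⟩ : ↥E).1 b' = ρ g (k.1 (φe.symm b')) := rfl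
      rw [h15, hb'] at h14
      show C a b = 0
      rw [hCapp]
      exact h14
    -- finish
    have hperpall : ∀ (w : W) (v : V), eV (hv.1 w) v = 0 := by
      intro w v
      have hvmem : v ∈ V₀ := by rw [hV₀top]; exact Submodule.mem_top
      induction hvmem using Submodule.span_induction with
      | mem x hx =>
        obtain ⟨g, k, hk, w', rfl⟩ := hx
        exact hkey g k hk w w'
      | zero => simp
      | add x y hx hy ihx ihy => rw [map_add, ihx, ihy, add_zero]
      | smul a x hx ihx =>
        rw [map_smul, smul_eq_mul, ihx, mul_zero]
    apply hvne
    have hv0 : ∀ w : W, hv.1 w = 0 := by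
      intro w
      apply eV.injective
      rw [map_zero]
      exact LinearMap.ext (hperpall w)
    exact Subtype.ext (LinearMap.ext hv0)
end

section
/- Let G be a finite group, N a normal subgroup, F a perfect splitting field of characteristic 2, and W an irreducible FN-module with W ≇ W*. Then every self-dual irreducible FG-module V whose restriction V↓_N contains W admits a non-degenerate G-invariant quadratic form (is of quadratic type). -/
open Module

section Aux

open Module LinearMap

variable {F : Type} [Field F] {H : Type} [Group H]
variable {V : Type} [AddCommGroup V] [Module F V]

/-- A subrepresentation that is simple as a subrep of the ambient space. -/
def SimpleSub (τ : Representation F H V) (U : Submodule F V) : Prop :=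
  IsSubrep τ U ∧ U ≠ ⊥ ∧ ∀ U', IsSubrep τ U' → U' ≤ U → U' = ⊥ ∨ U' = U

def InvPair (τ : Representation F H V) (P : V →ₗ[F] V →ₗ[F] F) : Prop :=
  ∀ (h : H) (v w : V), P (τ h v) (τ h w) = P v w

def NoSDPair (τ : Representation F H V) (U : Submodule F V) : Prop :=
  ∀ P : V →ₗ[F] V →ₗ[F] F, InvPair τ P → ∀ v ∈ U, ∀ w ∈ U, P v w = 0

variable {τ : Representation F H V}

lemma subrep_sup {U U' : Submodule F V} (h : IsSubrep τ U) (h' : IsSubrep τ U') :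
    IsSubrep τ (U ⊔ U') := by
  intro g v hv
  rcases Submodule.mem_sup.mp hv with ⟨x, hx, y, hy, rfl⟩
  rw [map_add]
  exact Submodule.mem_sup.mpr ⟨τ g x, h g x hx, τ g y, h' g y hy, rfl⟩

lemma subrep_inf {U U' : Submodule F V} (h : IsSubrep τ U) (h' : IsSubrep τ U') :
    IsSubrep τ (U ⊓ U') := fun g v hv => ⟨h g v hv.1, h' g v hv.2⟩

lemma subrep_sSup {S : Set (Submodule F V)} (hS : ∀ U ∈ S, IsSubrep τ U) :
    IsSubrep τ (sSup S) := by
  intro g v hv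
  rw [sSup_eq_iSup'] at hv ⊢
  refine Submodule.iSup_induction (motive := fun x => τ g x ∈ ⨆ U : S, (U : Submodule F V)) _ hv
    (fun U x hx => Submodule.mem_iSup_of_mem U (hS U U.2 g x hx)) (by simp) fun x y hx hy => by
      show τ g (x + y) ∈ _
      rw [map_add]; exact add_mem hx hy

lemma exists_simple_le [FiniteDimensional F V] :
    ∀ (n : ℕ) (D : Submodule F V), finrank F D ≤ n → IsSubrep τ D → D ≠ ⊥ →
      ∃ U, SimpleSub τ U ∧ U ≤ D := by
  intro n
  induction n with
  | zero =>
    intro D h hsub hne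
    exact absurd (Submodule.finrank_eq_zero.mp (Nat.le_zero.mp h)) hne
  | succ n ih =>
    intro D hle hsub hne
    by_cases hs : ∀ U', IsSubrep τ U' → U' ≤ D → U' = ⊥ ∨ U' = D
    · exact ⟨D, ⟨hsub, hne, hs⟩, le_rfl⟩
    · push_neg at hs
      obtain ⟨U', hU's, hU'le, hU'b, hU'd⟩ := hs
      have hlt : U' < D := lt_of_le_of_ne hU'le hU'd
      have hfr : finrank F U' ≤ n := by
        have := Submodule.finrank_lt_finrank_of_lt hlt; omega
      obtain ⟨U, hU, hUle⟩ := ih U' hfr hU's hU'b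
      exact ⟨U, hU, hUle.trans hU'le⟩

end Aux
section Aux2

open Module LinearMap

variable {F : Type} [Field F] {H : Type} [Group H]
variable {V : Type} [AddCommGroup V] [Module F V]
variable {τ : Representation F H V}

lemma compl_exists [FiniteDimensional F V]
    (hss : sSup {U | SimpleSub τ U} = ⊤) (T : Submodule F V) (hT : IsSubrep τ T) :
    ∃ C, IsSubrep τ C ∧ C ⊓ T = ⊥ ∧ C ⊔ T = ⊤ := by
  classical
  set S : Set ℕ := {n | ∃ C : Submodule F V, (IsSubrep τ C ∧ C ⊓ T = ⊥) ∧ finrank F C = n}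
    with hSdef
  have hne : S.Nonempty := ⟨finrank F (⊥ : Submodule F V),
    ⟨⊥, ⟨fun g v hv => by simp_all, bot_inf_eq T⟩, rfl⟩⟩
  have hbdd : BddAbove S := ⟨finrank F V, by
    rintro n ⟨C, _, rfl⟩; exact Submodule.finrank_le C⟩
  obtain ⟨C, ⟨hCsub, hCT⟩, hCn⟩ := Nat.sSup_mem hne hbdd
  refine ⟨C, hCsub, hCT, ?_⟩
  by_contra hne'
  have hA : ∃ A, SimpleSub τ A ∧ ¬ A ≤ C ⊔ T := by
    by_contra hA
    push_neg at hA
    exact hne' (top_le_iff.mp (hss ▸ sSup_le (fun A hA' => hA A hA')))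
  obtain ⟨A, hAsimp, hAle⟩ := hA
  have hAinf : A ⊓ (C ⊔ T) = ⊥ := by
    rcases hAsimp.2.2 (A ⊓ (C ⊔ T)) (subrep_inf hAsimp.1 (subrep_sup hCsub hT))
      inf_le_left with h | h
    · exact h
    · exact absurd (inf_eq_left.mp h) hAle
  have hC' : (C ⊔ A) ⊓ T = ⊥ := by
    rw [Submodule.eq_bot_iff]
    rintro x ⟨hx, hxT⟩
    rcases Submodule.mem_sup.mp hx with ⟨c, hc, a, ha, rfl⟩
    have haA : a ∈ A ⊓ (C ⊔ T) := by
      refine ⟨ha, ?_⟩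
      have hrw : a = (c + a) - c := by abel
      rw [hrw]
      exact Submodule.sub_mem _ (Submodule.mem_sup_right hxT) (Submodule.mem_sup_left hc)
    rw [hAinf] at haA
    have ha0 : a = 0 := haA
    have : c + a ∈ C ⊓ T := ⟨by simpa [ha0] using hc, hxT⟩
    rw [hCT] at this
    exact this
  have hlt : C < C ⊔ A := left_lt_sup.mpr (fun h => hAle (h.trans le_sup_left))
  have hmem : finrank F ↥(C ⊔ A) ∈ S := ⟨C ⊔ A, ⟨subrep_sup hCsub hAsimp.1, hC'⟩, rfl⟩
  have h1 : finrank F ↥(C ⊔ A) ≤ sSup S := le_csSup hbdd hmem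
  have h2 : finrank F C < finrank F ↥(C ⊔ A) := Submodule.finrank_lt_finrank_of_lt hlt
  omega

lemma subrep_eq_sSup_simples [FiniteDimensional F V]
    (hss : sSup {U | SimpleSub τ U} = ⊤) (Z : Submodule F V) (hZ : IsSubrep τ Z) :
    Z = sSup {U | SimpleSub τ U ∧ U ≤ Z} := by
  set Z₀ := sSup {U | SimpleSub τ U ∧ U ≤ Z} with hZ₀def
  have hZ₀sub : IsSubrep τ Z₀ := subrep_sSup (fun U hU => hU.1.1)
  have hZ₀le : Z₀ ≤ Z := sSup_le (fun U hU => hU.2)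
  obtain ⟨C, hCsub, hCZ₀, hCZ₀top⟩ := compl_exists hss Z₀ hZ₀sub
  have hD : Z ⊓ C = ⊥ := by
    by_contra hD
    obtain ⟨U, hUsimp, hUle⟩ :=
      exists_simple_le (τ := τ) (finrank F ↥(Z ⊓ C)) (Z ⊓ C) le_rfl
        (subrep_inf hZ hCsub) hD
    have hUZ₀ : U ≤ Z₀ := le_sSup ⟨hUsimp, hUle.trans inf_le_left⟩
    have : U ≤ C ⊓ Z₀ := le_inf (hUle.trans inf_le_right) hUZ₀
    rw [hCZ₀] at this
    exact hUsimp.2.1 (le_bot_iff.mp this)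
  refine le_antisymm ?_ hZ₀le
  intro z hz
  have : z ∈ C ⊔ Z₀ := hCZ₀top ▸ Submodule.mem_top
  rcases Submodule.mem_sup.mp this with ⟨c, hc, z₀, hz₀, rfl⟩
  have hcZ : c ∈ Z ⊓ C := ⟨by
    have : c = (c + z₀) - z₀ := by abel
    rw [this]
    exact Submodule.sub_mem _ hz (hZ₀le hz₀), hc⟩
  rw [hD] at hcZ
  have : c = 0 := hcZ
  simpa [this] using hz₀

end Aux2
section Aux3

open Module LinearMap

variable {F : Type} [Field F] {H : Type} [Group H]
variable {V : Type} [AddCommGroup V] [Module F V]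
variable {τ : Representation F H V}

lemma nsd_all [FiniteDimensional F V]
    (hss' : sSup {U | SimpleSub τ U ∧ NoSDPair τ U} = ⊤) :
    ∀ U, SimpleSub τ U → NoSDPair τ U := by
  have hss : sSup {U | SimpleSub τ U} = ⊤ := by
    refine le_antisymm le_top ?_
    rw [← hss']
    exact sSup_le_sSup (fun U hU => hU.1)
  intro U hU
  obtain ⟨C, hCsub, hCU, hCUtop⟩ := compl_exists hss U hU.1
  have hcompl : IsCompl U C := ⟨disjoint_iff.mpr (by rw [inf_comm]; exact hCU),
    codisjoint_iff.mpr (by rw [sup_comm]; exact hCUtop)⟩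
  set π : V →ₗ[F] V := U.subtype.comp (U.linearProjOfIsCompl C hcompl) with hπdef
  have hπleft : ∀ u ∈ U, π u = u := by
    intro u hu
    exact congrArg Subtype.val (Submodule.linearProjOfIsCompl_apply_left hcompl ⟨u, hu⟩)
  have hπright : ∀ c ∈ C, π c = 0 := by
    intro c hc
    show (↑(U.projectionOnto C hcompl c) : V) = 0
    rw [Submodule.projectionOnto_apply_of_mem_right hcompl hc]
    rfl
  have hπmem : ∀ v, π v ∈ U := fun v => SetLike.coe_mem _
  have hdecomp : ∀ v : V, ∃ u ∈ U, ∃ c ∈ C, v = u + c := by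
    intro v
    have hv : v ∈ U ⊔ C := by rw [sup_comm, hCUtop]; trivial
    obtain ⟨u, hu, c, hc, rfl⟩ := Submodule.mem_sup.mp hv
    exact ⟨u, hu, c, hc, rfl⟩
  have hπequiv : ∀ (h : H) (v : V), π (τ h v) = τ h (π v) := by
    intro h v
    obtain ⟨u, hu, c, hc, rfl⟩ := hdecomp v
    rw [map_add, map_add, map_add, hπleft u hu, hπright c hc,
      hπleft _ (hU.1 h u hu), hπright _ (hCsub h c hc)]
    simp
  obtain ⟨u₀, hu₀U, hu₀⟩ := Submodule.exists_mem_ne_zero_of_ne_bot hU.2.1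
  have hAex : ∃ A, (SimpleSub τ A ∧ NoSDPair τ A) ∧ ∃ a ∈ A, π a ≠ 0 := by
    by_contra hno
    push_neg at hno
    have hzero : ∀ v : V, π v = 0 := by
      intro v
      have hv : v ∈ sSup {U | SimpleSub τ U ∧ NoSDPair τ U} := by rw [hss']; trivial
      rw [sSup_eq_iSup'] at hv
      refine Submodule.iSup_induction (motive := fun x => π x = 0) _ hv
        (fun A a ha => hno A A.2 a ha) (map_zero π) ?_
      intro x y hx hy
      rw [map_add, hx, hy, add_zero]
    exact hu₀ ((hπleft u₀ hu₀U).symm.trans (hzero u₀))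
  obtain ⟨A, ⟨hAsimp, hAnsd⟩, a₀, ha₀A, ha₀⟩ := hAex
  have hmapsub : IsSubrep τ (A.map π) := by
    rintro h v ⟨a, ha, rfl⟩
    exact ⟨τ h a, hAsimp.1 h a ha, hπequiv h a⟩
  have hmaple : A.map π ≤ U := by rintro v ⟨a, ha, rfl⟩; exact hπmem a
  have hmapne : A.map π ≠ ⊥ := by
    intro h
    exact ha₀ ((Submodule.eq_bot_iff _).mp h (π a₀) ⟨a₀, ha₀A, rfl⟩)
  have hmap : A.map π = U := (hU.2.2 _ hmapsub hmaple).resolve_left hmapne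
  intro P hP v hv w hw
  have hP' : InvPair τ (P.compl₁₂ π π) := by
    intro h x y
    simp only [LinearMap.compl₁₂_apply]
    rw [hπequiv, hπequiv, hP]
  rw [← hmap] at hv hw
  obtain ⟨a, haA, rfl⟩ := hv
  obtain ⟨b, hbA, rfl⟩ := hw
  have := hAnsd _ hP' a haA b hbA
  simpa using this

lemma q_zero [FiniteDimensional F V]
    (hss : sSup {U | SimpleSub τ U} = ⊤)
    (hnsd : ∀ U, SimpleSub τ U → NoSDPair τ U)
    (B : V →ₗ[F] V →ₗ[F] F) (π π' : V →ₗ[F] V)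
    (hπ : ∀ (h : H) (v : V), π (τ h v) = τ h (π v))
    (hπ' : ∀ (h : H) (v : V), π' (τ h v) = τ h (π' v))
    (hInv : InvPair τ B)
    (hpol : ∀ v w, B (π v) (π' w) + B (π w) (π' v) = B v w)
    (Z : Submodule F V) (hZ : IsSubrep τ Z)
    (hiso : ∀ v ∈ Z, ∀ w ∈ Z, B v w = 0) :
    ∀ z ∈ Z, B (π z) (π' z) = 0 := by
  have hP' : InvPair τ (B.compl₁₂ π π') := by
    intro h x y
    simp only [LinearMap.compl₁₂_apply]
    rw [hπ, hπ', hInv]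
  intro z hz
  rw [subrep_eq_sSup_simples hss Z hZ, sSup_eq_iSup'] at hz
  have key : B (π z) (π' z) = 0 ∧ z ∈ Z := by
    refine Submodule.iSup_induction
      (motive := fun x => B (π x) (π' x) = 0 ∧ x ∈ Z) _ hz ?_ (by simp) ?_
    · rintro ⟨A, hAsimp, hAle⟩ x hx
      refine ⟨?_, hAle hx⟩
      have := hnsd A hAsimp (B.compl₁₂ π π') hP' x hx x hx
      simpa using this
    · rintro x y ⟨hx, hxZ⟩ ⟨hy, hyZ⟩
      refine ⟨?_, add_mem hxZ hyZ⟩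
      have hxy : B x y = 0 := hiso x hxZ y hyZ
      have e1 : B (π (x + y)) (π' (x + y)) =
          B (π x) (π' x) + (B (π x) (π' y) + B (π y) (π' x)) + B (π y) (π' y) := by
        simp only [map_add, LinearMap.add_apply]
        ring
      rw [e1, hpol, hxy, hx, hy]
      ring
  exact key.1

end Aux3
section Aux4

open Module LinearMap

variable {F : Type} [Field F] {H : Type} [Group H]
variable {V : Type} [AddCommGroup V] [Module F V]
variable {τ : Representation F H V} {B : V →ₗ[F] V →ₗ[F] F}

lemma rep_apply_inv (τ : Representation F H V) (h : H) (x : V) : τ h (τ h⁻¹ x) = x := by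
  rw [← Module.End.mul_apply, ← map_mul, mul_inv_cancel, map_one, Module.End.one_apply]

lemma perp_mem (S : Submodule F V) (v : V) :
    v ∈ (⨅ d : S, LinearMap.ker (B d.1)) ↔ ∀ d ∈ S, B d v = 0 := by
  simp [Submodule.mem_iInf, LinearMap.mem_ker, Subtype.forall]

lemma perp_subrep (hInv : InvPair τ B) {S : Submodule F V} (hS : IsSubrep τ S) :
    IsSubrep τ (⨅ d : S, LinearMap.ker (B d.1)) := by
  intro h v hv
  rw [perp_mem] at hv ⊢
  intro d hd
  have h2 : B (τ h (τ h⁻¹ d)) (τ h v) = B (τ h⁻¹ d) v := hInv h _ v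
  rw [rep_apply_inv] at h2
  rw [h2]
  exact hv _ (hS h⁻¹ d hd)

lemma simple_orth_zero (hInv : InvPair τ B) {U' U : Submodule F V}
    (hU' : SimpleSub τ U') (hUsub : IsSubrep τ U) {x₀ y₀ : V}
    (hx₀ : x₀ ∈ U) (hy₀ : y₀ ∈ U') (hB : B x₀ y₀ ≠ 0) :
    ∀ w ∈ U', (∀ c ∈ U, B c w = 0) → w = 0 := by
  intro w hw hw0
  set K := U' ⊓ (⨅ d : U, LinearMap.ker (B d.1)) with hK
  have hKsub : IsSubrep τ K := subrep_inf hU'.1 (perp_subrep hInv hUsub)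
  have hKne : K ≠ U' := by
    intro h
    apply hB
    have : y₀ ∈ K := h ▸ hy₀
    exact (perp_mem U y₀).mp this.2 x₀ hx₀
  have hKbot : K = ⊥ := (hU'.2.2 K hKsub inf_le_left).resolve_right hKne
  have : w ∈ K := ⟨hw, (perp_mem U w).mpr hw0⟩
  rw [hKbot] at this
  exact this

lemma decomp [FiniteDimensional F V]
    (hss : sSup {U | SimpleSub τ U} = ⊤)
    (hInv : InvPair τ B) (hsym : ∀ v w, B v w = B w v)
    (hisoS : ∀ U, SimpleSub τ U → ∀ v ∈ U, ∀ w ∈ U, B v w = 0) :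
    ∀ (n : ℕ) (M : Submodule F V), finrank F M ≤ n → IsSubrep τ M →
      (∀ v ∈ M, (∀ w ∈ M, B v w = 0) → v = 0) →
      ∃ Y Y' : Submodule F V, IsSubrep τ Y ∧ IsSubrep τ Y' ∧ Y ≤ M ∧ Y' ≤ M ∧
        (∀ v ∈ Y, ∀ w ∈ Y, B v w = 0) ∧ (∀ v ∈ Y', ∀ w ∈ Y', B v w = 0) ∧
        Y ⊓ Y' = ⊥ ∧ Y ⊔ Y' = M := by
  have hbotsub : IsSubrep τ (⊥ : Submodule F V) := by
    intro g v hv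
    rw [Submodule.mem_bot] at hv ⊢
    rw [hv, map_zero]
  have hbotcase : ∀ M : Submodule F V, M = ⊥ →
      ∃ Y Y' : Submodule F V, IsSubrep τ Y ∧ IsSubrep τ Y' ∧ Y ≤ M ∧ Y' ≤ M ∧
        (∀ v ∈ Y, ∀ w ∈ Y, B v w = 0) ∧ (∀ v ∈ Y', ∀ w ∈ Y', B v w = 0) ∧
        Y ⊓ Y' = ⊥ ∧ Y ⊔ Y' = M := by
    rintro M rfl
    refine ⟨⊥, ⊥, hbotsub, hbotsub, le_rfl, le_rfl, ?_, ?_, by simp, by simp⟩ <;>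
    · intro v hv w hw
      rw [Submodule.mem_bot] at hv
      rw [hv, map_zero, LinearMap.zero_apply]
  intro n
  induction n with
  | zero =>
    intro M hfr _ _
    exact hbotcase M (Submodule.finrank_eq_zero.mp (Nat.le_zero.mp hfr))
  | succ n ih =>
    intro M hfr hMsub hMnd
    by_cases hM : M = ⊥
    · exact hbotcase M hM
    obtain ⟨U, hUsimp, hUle⟩ :=
      exists_simple_le (τ := τ) (finrank F M) M le_rfl hMsub hM
    obtain ⟨u₀, hu₀U, hu₀ne⟩ := Submodule.exists_mem_ne_zero_of_ne_bot hUsimp.2.1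
    have hu₀M : u₀ ∈ M := hUle hu₀U
    have hc : ∃ m ∈ M, B u₀ m ≠ 0 := by
      by_contra hno
      push_neg at hno
      exact hu₀ne (hMnd u₀ hu₀M hno)
    have hU'ex : ∃ U', (SimpleSub τ U' ∧ U' ≤ M) ∧ ∃ x ∈ U', B u₀ x ≠ 0 := by
      by_contra hno
      push_neg at hno
      obtain ⟨m, hm, hm0⟩ := hc
      apply hm0
      have hmem : m ∈ sSup {U' | SimpleSub τ U' ∧ U' ≤ M} := by
        rw [← subrep_eq_sSup_simples hss M hMsub]; exact hm
      rw [sSup_eq_iSup'] at hmem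
      exact Submodule.iSup_induction (motive := fun x => B u₀ x = 0) _ hmem
        (fun A x hx => hno A A.2 x hx) (map_zero _)
        (fun x y hx hy => by
          show B u₀ (x + y) = 0
          rw [map_add, hx, hy, add_zero])
    obtain ⟨U', ⟨hU'simp, hU'le⟩, u₀', hu₀'U', hBu₀u₀'⟩ := hU'ex
    have hUU : ∀ v ∈ U, ∀ w ∈ U, B v w = 0 := hisoS U hUsimp
    have hU'U' : ∀ v ∈ U', ∀ w ∈ U', B v w = 0 := hisoS U' hU'simp
    set D := U ⊔ U' with hDdef
    have hDsub : IsSubrep τ D := subrep_sup hUsimp.1 hU'simp.1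
    have hDle : D ≤ M := sup_le hUle hU'le
    have hDne : D ≠ ⊥ := by
      intro h
      apply hu₀ne
      have : u₀ ∈ (⊥ : Submodule F V) := h ▸ (Submodule.mem_sup_left hu₀U)
      exact this
    -- nondegeneracy on D
    have hDnd : ∀ v ∈ D, (∀ w ∈ D, B v w = 0) → v = 0 := by
      intro v hv hv0
      obtain ⟨u, hu, u', hu', rfl⟩ := Submodule.mem_sup.mp hv
      have h1 : ∀ c ∈ U, B c u' = 0 := by
        intro c hc
        have h2 := hv0 c (Submodule.mem_sup_left hc)
        rw [map_add, LinearMap.add_apply] at h2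
        have h3 : B u c = 0 := hUU u hu c hc
        rw [hsym]
        rw [h3] at h2
        simpa using h2
      have h2 : ∀ c' ∈ U', B c' u = 0 := by
        intro c' hc'
        have h3 := hv0 c' (Submodule.mem_sup_right hc')
        rw [map_add, LinearMap.add_apply] at h3
        have h4 : B u' c' = 0 := hU'U' u' hu' c' hc'
        rw [hsym]
        rw [h4] at h3
        simpa using h3
      have hu'0 : u' = 0 :=
        simple_orth_zero hInv hU'simp hUsimp.1 hu₀U hu₀'U' hBu₀u₀' u' hu' h1
      have hu0 : u = 0 := by
        refine simple_orth_zero hInv hUsimp hU'simp.1 hu₀'U' hu₀U ?_ u hu h2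
        rw [hsym]
        exact hBu₀u₀'
      rw [hu0, hu'0, add_zero]
    set Pp := (⨅ d : D, LinearMap.ker (B d.1)) with hPpdef
    have hPpsub : IsSubrep τ Pp := perp_subrep hInv hDsub
    set E := M ⊓ Pp with hEdef
    have hEsub : IsSubrep τ E := subrep_inf hMsub hPpsub
    have hEperp : ∀ e ∈ E, ∀ s ∈ D, B s e = 0 ∧ B e s = 0 := by
      intro e he s hs
      have h1 : B s e = 0 := (perp_mem D e).mp he.2 s hs
      exact ⟨h1, by rw [hsym]; exact h1⟩
    have hDE : D ⊓ E = ⊥ := by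
      rw [Submodule.eq_bot_iff]
      rintro x ⟨hxD, hxE⟩
      refine hDnd x hxD ?_
      intro w hw
      rw [hsym]
      exact (perp_mem D x).mp hxE.2 w hw
    have hDEsup : D ⊔ E = M := by
      refine le_antisymm (sup_le hDle inf_le_left) ?_
      intro m hm
      set θ : ↥D →ₗ[F] Module.Dual F ↥D := (B.compl₁₂ D.subtype D.subtype).flip with hθdef
      have hθapp : ∀ (d d' : ↥D), θ d d' = B d'.1 d.1 := fun d d' => rfl
      have hθinj : Function.Injective θ := by
        rw [← LinearMap.ker_eq_bot]
        rw [Submodule.eq_bot_iff]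
        intro d hd
        have hd0 : ∀ w ∈ D, B d.1 w = 0 := by
          intro w hw
          rw [hsym]
          have := DFunLike.congr_fun (LinearMap.mem_ker.mp hd) ⟨w, hw⟩
          simpa [hθapp] using this
        have : d.1 = 0 := hDnd d.1 d.2 hd0
        exact Subtype.ext this
      have hθsurj : Function.Surjective θ := by
        rw [← LinearMap.range_eq_top]
        refine Submodule.eq_top_of_finrank_eq ?_
        rw [LinearMap.finrank_range_of_inj hθinj, Subspace.dual_finrank_eq]
      obtain ⟨d, hd⟩ := hθsurj ((B.flip m).comp D.subtype)
      have hmd : m - d.1 ∈ E := by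
        refine ⟨Submodule.sub_mem M hm (hDle d.2), (perp_mem D _).mpr ?_⟩
        intro c hc
        have h5 := DFunLike.congr_fun hd ⟨c, hc⟩
        rw [hθapp] at h5
        have h6 : B c d.1 = B c m := h5
        rw [map_sub, h6, sub_self]
      have h7 : m = d.1 + (m - d.1) := by abel
      have hA : d.1 ∈ D ⊔ E := Submodule.mem_sup_left d.2
      have hB2 : m - d.1 ∈ D ⊔ E := Submodule.mem_sup_right hmd
      rw [h7]
      exact add_mem hA hB2
    have hEnd : ∀ v ∈ E, (∀ w ∈ E, B v w = 0) → v = 0 := by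
      intro v hv hv0
      refine hMnd v hv.1 ?_
      intro w hw
      have hw2 : w ∈ D ⊔ E := hDEsup.symm ▸ hw
      obtain ⟨d, hd, e, he, rfl⟩ := Submodule.mem_sup.mp hw2
      rw [map_add, (hEperp v hv d hd).2, hv0 e he, add_zero]
    have hElt : finrank F E ≤ n := by
      have hEM : E < M := by
        refine lt_of_le_of_ne inf_le_left ?_
        intro h
        apply hDne
        have h8 : D ⊓ E = D := by rw [h]; exact inf_eq_left.mpr hDle
        rw [← h8, hDE]
      have := Submodule.finrank_lt_finrank_of_lt hEM
      omega
    obtain ⟨Y₁, Y₁', hY₁sub, hY₁'sub, hY₁le, hY₁'le, hY₁iso, hY₁'iso, hY₁inf, hY₁sup⟩ :=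
      ih E hElt hEsub hEnd
    refine ⟨U ⊔ Y₁, U' ⊔ Y₁', subrep_sup hUsimp.1 hY₁sub, subrep_sup hU'simp.1 hY₁'sub,
      sup_le hUle (hY₁le.trans inf_le_left), sup_le hU'le (hY₁'le.trans inf_le_left),
      ?_, ?_, ?_, ?_⟩
    · intro v hv w hw
      obtain ⟨a, ha, y, hy, rfl⟩ := Submodule.mem_sup.mp hv
      obtain ⟨b, hb, z, hz, rfl⟩ := Submodule.mem_sup.mp hw
      have hyE : y ∈ E := hY₁le hy
      have hzE : z ∈ E := hY₁le hz
      simp only [map_add, LinearMap.add_apply]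
      rw [hUU a ha b hb, (hEperp z hzE a (Submodule.mem_sup_left ha)).1,
        (hEperp y hyE b (Submodule.mem_sup_left hb)).2, hY₁iso y hy z hz]
      ring
    · intro v hv w hw
      obtain ⟨a, ha, y, hy, rfl⟩ := Submodule.mem_sup.mp hv
      obtain ⟨b, hb, z, hz, rfl⟩ := Submodule.mem_sup.mp hw
      have hyE : y ∈ E := hY₁'le hy
      have hzE : z ∈ E := hY₁'le hz
      simp only [map_add, LinearMap.add_apply]
      rw [hU'U' a ha b hb, (hEperp z hzE a (Submodule.mem_sup_right ha)).1,
        (hEperp y hyE b (Submodule.mem_sup_right hb)).2, hY₁'iso y hy z hz]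
      ring
    · -- inf = ⊥
      have hUU' : U ⊓ U' = ⊥ := by
        rcases hUsimp.2.2 (U ⊓ U') (subrep_inf hUsimp.1 hU'simp.1) inf_le_left with h | h
        · exact h
        · exfalso
          apply hBu₀u₀'
          have : U ≤ U' := by rw [← h]; exact inf_le_right
          exact hU'U' u₀ (this hu₀U) u₀' hu₀'U'
      rw [Submodule.eq_bot_iff]
      rintro x ⟨hx1, hx2⟩
      obtain ⟨a, ha, y, hy, rfl⟩ := Submodule.mem_sup.mp hx1
      obtain ⟨b, hb, z, hz, hx⟩ := Submodule.mem_sup.mp hx2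
      have hab : a - b ∈ D ⊓ E := by
        constructor
        · exact Submodule.sub_mem D (Submodule.mem_sup_left ha) (Submodule.mem_sup_right hb)
        · have h9 : a - b = z - y := by
            have : b + z = a + y := hx
            have h10 : a + y = z + b := by rw [← this]; abel
            rw [sub_eq_sub_iff_add_eq_add]
            exact h10
          rw [h9]
          exact Submodule.sub_mem E (hY₁'le hz) (hY₁le hy)
      rw [hDE] at hab
      have hab0 : a - b = 0 := hab
      have haU' : a ∈ U ⊓ U' := by
        refine ⟨ha, ?_⟩
        have : a = b := by
          have := sub_eq_zero.mp hab0
          exact this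
        rw [this]; exact hb
      rw [hUU'] at haU'
      have ha0 : a = 0 := haU'
      have hyz : y = z := by
        have hab' : a = b := sub_eq_zero.mp hab0
        have : b + z = a + y := hx
        rw [hab'] at this
        exact (add_left_cancel this).symm
      have : y ∈ Y₁ ⊓ Y₁' := ⟨hy, hyz ▸ hz⟩
      rw [hY₁inf] at this
      have hy0 : y = 0 := this
      rw [ha0, hy0, add_zero]
    · rw [sup_sup_sup_comm, hY₁sup, hDEsup]

end Aux4

/-- if W is an irreducible FN-module that is not self-dual, then every self-dual
irreducible FG-module whose restriction to N contains W is of quadratic type. -/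
theorem stmt_14 {F : Type} [Field F] [CharP F 2] [PerfectField F]
    {G : Type} [Group G] [Finite G] (N : Subgroup G) [N.Normal]
    (hsplit : ∀ H : Subgroup G, IsSplitting F ↥H)
    {W : Type} [AddCommGroup W] [Module F W] [FiniteDimensional F W]
    (σ : Representation F ↥N W) (hirrW : IsIrred σ) (hnsd : ¬ IsSelfDual σ)
    {V : Type} [AddCommGroup V] [Module F V] [FiniteDimensional F V]
    (ρ : Representation F G V) (hirrV : IsIrred ρ) (hsdV : IsSelfDual ρ)
    (hover : EquivHom σ (ρ.comp N.subtype) ≠ ⊥) :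
    HasQuadType ρ := by
  classical
  obtain ⟨hVnt, hVirr⟩ := hirrV
  obtain ⟨hWnt, hWirr⟩ := hirrW
  set ρN : Representation F ↥N V := ρ.comp N.subtype with hρNdef
  -- the invariant bilinear form coming from self-duality
  obtain ⟨e, he⟩ := hsdV
  set B : V →ₗ[F] V →ₗ[F] F := e.toLinearMap with hBdef
  have hBapp : ∀ v w, B v w = e v w := fun v w => rfl
  have hρinv : ∀ (g : G) (x : V), ρ g (ρ g⁻¹ x) = x := fun g x => rep_apply_inv ρ g x
  have hρinv' : ∀ (g : G) (x : V), ρ g⁻¹ (ρ g x) = x := by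
    intro g x
    have := rep_apply_inv ρ g⁻¹ x
    simpa using this
  have hdual : ∀ (g : G) (f : Module.Dual F V) (w : V), (ρ.dual g f) w = f (ρ g⁻¹ w) := by
    intro g f w
    rw [Representation.dual_apply]
    rfl
  have hBinv : BilinInvariant ρ B := by
    intro g v w
    rw [hBapp, hBapp, he g v, hdual, hρinv']
  have hBnd : Nondeg B := by
    intro v hv
    have h0 : e v = 0 := LinearMap.ext hv
    exact (LinearEquiv.map_eq_zero_iff e).mp h0
  have hmul : ∀ (a b : G) (v : V), ρ a (ρ b v) = ρ (a * b) v := by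
    intro a b v
    rw [map_mul]
    rfl
  -- symmetry of B via the splitting hypothesis applied to ⊤
  have hρtopirr : IsIrred (ρ.comp (⊤ : Subgroup G).subtype) := by
    refine ⟨hVnt, fun U hU => hVirr U ?_⟩
    intro g v hv
    exact hU ⟨g, trivial⟩ v hv
  have heinv : ∀ (g : G) (φ : Module.Dual F V), e.symm (ρ.dual g φ) = ρ g (e.symm φ) := by
    intro g φ
    apply e.injective
    rw [e.apply_symm_apply, he g (e.symm φ), e.apply_symm_apply]
  have hflipinv : ∀ (g : G) (v : V), B.flip (ρ g v) = ρ.dual g (B.flip v) := by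
    intro g v
    apply LinearMap.ext
    intro w
    rw [LinearMap.flip_apply, hdual, LinearMap.flip_apply]
    conv_lhs => rw [← hρinv g w]
    rw [hBinv g]
  set φmap : V →ₗ[F] V := (e.symm : Module.Dual F V →ₗ[F] V).comp B.flip with hφdef
  have hφequiv : ∀ (g : G) (v : V), φmap (ρ g v) = ρ g (φmap v) := by
    intro g v
    simp only [hφdef, LinearMap.comp_apply, LinearEquiv.coe_coe]
    rw [hflipinv, heinv]
  have hφmem : φmap ∈
      EquivHom (ρ.comp (⊤ : Subgroup G).subtype) (ρ.comp (⊤ : Subgroup G).subtype) := by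
    intro g v
    exact hφequiv g.1 v
  obtain ⟨c, hc⟩ := hsplit ⊤ V (ρ.comp (⊤ : Subgroup G).subtype) inferInstance hρtopirr φmap hφmem
  have hBc : ∀ v w, B w v = c * B v w := by
    intro v w
    have h1 : φmap v = c • v := by rw [hc]; rfl
    have h2 : e (φmap v) = B.flip v := by simp [hφdef]
    have h3 : B w v = e (φmap v) w := by rw [h2]; rfl
    rw [h3, h1, map_smul, LinearMap.smul_apply, smul_eq_mul]
    rfl
  have htwo : (2 : F) = 0 := by
    have := CharP.cast_eq_zero F 2
    simpa using this
  have hcc : c * c = 1 := by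
    obtain ⟨x, y, hxy⟩ := hVnt
    have hv0 : (x - y : V) ≠ 0 := sub_ne_zero.mpr hxy
    have hex : ∃ w, B (x - y) w ≠ 0 := by
      by_contra hbw
      push_neg at hbw
      exact hv0 (hBnd _ hbw)
    obtain ⟨w, hw⟩ := hex
    have h1 : B (x - y) w = c * B w (x - y) := hBc w (x - y)
    have h2 : B w (x - y) = c * B (x - y) w := hBc (x - y) w
    rw [h2] at h1
    have h4 : (c * c) * B (x - y) w = 1 * B (x - y) w := by
      rw [one_mul, mul_assoc]
      exact h1.symm
    exact mul_right_cancel₀ hw h4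
  have hc1 : c = 1 := by
    have h5 : (c + 1) * (c + 1) = 0 := by
      have h6 : (c + 1) * (c + 1) = c * c + 2 * c + 1 := by ring
      rw [h6, hcc]
      linear_combination (c + 1) * htwo
    have h7 : c + 1 = 0 := by
      rcases mul_eq_zero.mp h5 with h | h <;> exact h
    have h8 : c = -1 := eq_neg_of_add_eq_zero_left h7
    rw [h8, CharTwo.neg_eq]
  have hBsym : ∀ v w, B v w = B w v := by
    intro v w
    rw [hBc w v, hc1, one_mul]
  -- restriction to N
  have hBinvN : InvPair ρN B := fun nn v w => hBinv nn v w
  have hmapsub : ∀ (g : G) (U : Submodule F V), IsSubrep ρN U → IsSubrep ρN (U.map (ρ g)) := by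
    intro g U hU nn v hv
    obtain ⟨u, hu, rfl⟩ := hv
    have hm : g⁻¹ * ↑nn * g ∈ N := by
      simpa using Subgroup.Normal.conj_mem ‹N.Normal› ↑nn nn.2 g⁻¹
    refine ⟨ρ (g⁻¹ * ↑nn * g) u, hU ⟨_, hm⟩ u hu, ?_⟩
    show ρ g (ρ (g⁻¹ * ↑nn * g) u) = ρ ↑nn (ρ g u)
    rw [hmul, hmul]
    have h9 : g * (g⁻¹ * ↑nn * g) = ↑nn * g := by group
    rw [h9]
  -- the seed simple non-self-dual subrep coming from W
  obtain ⟨f, hfmem, hfne⟩ := Submodule.exists_mem_ne_zero_of_ne_bot hover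
  have hf : ∀ (nn : ↥N) (w : W), f (σ nn w) = ρN nn (f w) := hfmem
  set U₀ := LinearMap.range f with hU₀def
  have hU₀sub : IsSubrep ρN U₀ := by
    rintro nn v ⟨w, rfl⟩
    exact ⟨σ nn w, hf nn w⟩
  have hU₀ne : U₀ ≠ ⊥ := by
    rw [hU₀def, ne_eq, LinearMap.range_eq_bot]
    exact hfne
  have hU₀min : ∀ U', IsSubrep ρN U' → U' ≤ U₀ → U' = ⊥ ∨ U' = U₀ := by
    intro U' hU'sub hU'le
    have hK : IsSubrep σ (U'.comap f) := by
      intro nn w hw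
      show f (σ nn w) ∈ U'
      rw [hf]
      exact hU'sub nn (f w) hw
    rcases hWirr _ hK with h | h
    · left
      rw [Submodule.eq_bot_iff]
      intro x hx
      obtain ⟨w, rfl⟩ := hU'le hx
      have hw2 : w ∈ U'.comap f := hx
      rw [h, Submodule.mem_bot] at hw2
      rw [hw2, map_zero]
    · right
      refine le_antisymm hU'le ?_
      rintro v ⟨w, rfl⟩
      have : w ∈ U'.comap f := h ▸ Submodule.mem_top
      exact this
  have hU₀simp : SimpleSub ρN U₀ := ⟨hU₀sub, hU₀ne, hU₀min⟩
  have hσinv : ∀ (nn : ↥N) (x : W), σ nn (σ nn⁻¹ x) = x := fun nn x => rep_apply_inv σ nn x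
  have hU₀nsd : NoSDPair ρN U₀ := by
    intro P hP v hv w hw
    set φ : W →ₗ[F] W →ₗ[F] F := P.compl₁₂ f f with hφ2def
    have hφinv : ∀ (nn : ↥N) (a b : W), φ (σ nn a) (σ nn b) = φ a b := by
      intro nn a b
      simp only [hφ2def, LinearMap.compl₁₂_apply]
      rw [hf, hf, hP]
    have hφ0 : φ = 0 := by
      by_contra hφne
      apply hnsd
      have hker : IsSubrep σ (LinearMap.ker φ) := by
        intro nn a ha
        rw [LinearMap.mem_ker] at ha ⊢
        apply LinearMap.ext
        intro b
        have h9 : φ (σ nn a) (σ nn (σ nn⁻¹ b)) = φ a (σ nn⁻¹ b) := hφinv nn a (σ nn⁻¹ b)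
        rw [hσinv] at h9
        rw [h9, ha]
        rfl
      have hkerbot : LinearMap.ker φ = ⊥ := by
        rcases hWirr _ hker with h | h
        · exact h
        · exfalso
          apply hφne
          apply LinearMap.ext
          intro a
          have ha : a ∈ LinearMap.ker φ := h ▸ Submodule.mem_top
          simpa using ha
      have hinj : Function.Injective φ := LinearMap.ker_eq_bot.mp hkerbot
      have hsurj : Function.Surjective φ := by
        rw [← LinearMap.range_eq_top]
        refine Submodule.eq_top_of_finrank_eq ?_
        rw [LinearMap.finrank_range_of_inj hinj, Subspace.dual_finrank_eq]
      refine ⟨LinearEquiv.ofBijective φ ⟨hinj, hsurj⟩, ?_⟩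
      intro nn a
      have hoa : ∀ x : W, (LinearEquiv.ofBijective φ ⟨hinj, hsurj⟩) x = φ x := fun x => rfl
      apply LinearMap.ext
      intro b
      rw [hoa, hoa]
      have h9 : φ (σ nn a) b = φ a (σ nn⁻¹ b) := by
        conv_lhs => rw [← hσinv nn b]
        exact hφinv nn a (σ nn⁻¹ b)
      rw [h9, Representation.dual_apply]
      rfl
    obtain ⟨a, rfl⟩ := hv
    obtain ⟨b, rfl⟩ := hw
    have hab : φ a b = 0 := by rw [hφ0]; rfl
    simpa [hφ2def] using hab
  -- the span of all non-self-dual simples is G-invariant, hence everything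
  set 𝒜 : Set (Submodule F V) := {U | SimpleSub ρN U ∧ NoSDPair ρN U} with h𝒜def
  have hstab : ∀ (g : G), ∀ U ∈ 𝒜, U.map (ρ g) ∈ 𝒜 := by
    intro g U hU
    refine ⟨⟨hmapsub g U hU.1.1, ?_, ?_⟩, ?_⟩
    · obtain ⟨u₁, hu₁U, hu₁ne⟩ := Submodule.exists_mem_ne_zero_of_ne_bot hU.1.2.1
      rw [Submodule.ne_bot_iff]
      refine ⟨ρ g u₁, ⟨u₁, hu₁U, rfl⟩, ?_⟩
      intro h0
      apply hu₁ne
      rw [← hρinv' g u₁, h0, map_zero]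
    · intro U' hU'sub hU'le
      have hU''le : U'.map (ρ g⁻¹) ≤ U := by
        rintro v ⟨u', hu', rfl⟩
        obtain ⟨u, hu, rfl⟩ := hU'le hu'
        rw [hρinv']
        exact hu
      rcases hU.1.2.2 _ (hmapsub g⁻¹ U' hU'sub) hU''le with h | h
      · left
        rw [Submodule.eq_bot_iff]
        intro x hx
        have : ρ g⁻¹ x ∈ U'.map (ρ g⁻¹) := ⟨x, hx, rfl⟩
        rw [h, Submodule.mem_bot] at this
        rw [← hρinv g x, this, map_zero]
      · right
        refine le_antisymm hU'le ?_
        rintro v ⟨u, hu, rfl⟩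
        rw [← h] at hu
        obtain ⟨u', hu', rfl⟩ := hu
        rw [hρinv]
        exact hu'
    · intro P hP v hv w hw
      obtain ⟨a, ha, rfl⟩ := hv
      obtain ⟨b, hb, rfl⟩ := hw
      have hP' : InvPair ρN (P.compl₁₂ (ρ g) (ρ g)) := by
        intro nn x y
        simp only [LinearMap.compl₁₂_apply]
        have hm : g * ↑nn * g⁻¹ ∈ N := Subgroup.Normal.conj_mem ‹N.Normal› ↑nn nn.2 g
        have h9 : ∀ z : V, ρ g (ρN nn z) = ρN ⟨g * ↑nn * g⁻¹, hm⟩ (ρ g z) := by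
          intro z
          show ρ g (ρ ↑nn z) = ρ (g * ↑nn * g⁻¹) (ρ g z)
          rw [hmul, hmul]
          have : g * ↑nn * g⁻¹ * g = g * ↑nn := by group
          rw [this]
        rw [h9 x, h9 y, hP]
      exact hU.2 _ hP' a ha b hb
  set X := sSup 𝒜 with hXdef
  have hXsubG : IsSubrep ρ X := by
    intro g v hv
    rw [hXdef, sSup_eq_iSup'] at hv
    refine Submodule.iSup_induction (motive := fun x => ρ g x ∈ X) _ hv ?_ (by simp) ?_
    · rintro ⟨U, hU⟩ x hx
      exact le_sSup (hstab g U hU) ⟨x, hx, rfl⟩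
    · intro x y hx hy
      show ρ g (x + y) ∈ X
      rw [map_add]
      exact add_mem hx hy
  have hss' : sSup 𝒜 = ⊤ := by
    rcases hVirr X hXsubG with h | h
    · exfalso
      apply hU₀ne
      have hle : U₀ ≤ X := le_sSup ⟨hU₀simp, hU₀nsd⟩
      rw [h] at hle
      exact le_bot_iff.mp hle
    · exact h
  have hss : sSup {U | SimpleSub ρN U} = ⊤ := by
    refine le_antisymm le_top ?_
    rw [← hss']
    exact sSup_le_sSup (fun U hU => hU.1)
  have hnsdall : ∀ U, SimpleSub ρN U → NoSDPair ρN U := nsd_all hss'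
  have hisoS : ∀ U, SimpleSub ρN U → ∀ v ∈ U, ∀ w ∈ U, B v w = 0 := by
    intro U hU v hv w hw
    exact hnsdall U hU B hBinvN v hv w hw
  -- decompose V = Y ⊕ Y' into two totally isotropic N-subreps
  have hMnd : ∀ v ∈ (⊤ : Submodule F V), (∀ w ∈ (⊤ : Submodule F V), B v w = 0) → v = 0 := by
    intro v _ h
    exact hBnd v (fun w => h w trivial)
  obtain ⟨Y, Y', hYsub, hY'sub, _, _, hYiso, hY'iso, hYinf, hYsup⟩ :=
    decomp hss hBinvN hBsym hisoS (finrank F (⊤ : Submodule F V)) ⊤ le_rfl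
      (fun _ _ _ => trivial) hMnd
  have hcompl : IsCompl Y Y' := ⟨disjoint_iff.mpr hYinf, codisjoint_iff.mpr hYsup⟩
  set π : V →ₗ[F] V := Y.subtype.comp (Y.linearProjOfIsCompl Y' hcompl) with hπdef
  set π' : V →ₗ[F] V := Y'.subtype.comp (Y'.linearProjOfIsCompl Y hcompl.symm) with hπ'def
  have hπY : ∀ v, π v ∈ Y := fun v => SetLike.coe_mem _
  have hπ'Y' : ∀ v, π' v ∈ Y' := fun v => SetLike.coe_mem _
  have hπleft : ∀ y ∈ Y, π y = y := fun y hy =>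
    congrArg Subtype.val (Submodule.linearProjOfIsCompl_apply_left hcompl ⟨y, hy⟩)
  have hπright : ∀ z ∈ Y', π z = 0 := by
    intro z hz
    show (↑(Y.projectionOnto Y' hcompl z) : V) = 0
    rw [Submodule.projectionOnto_apply_of_mem_right hcompl hz]
    rfl
  have hπ'left : ∀ z ∈ Y', π' z = z := fun z hz =>
    congrArg Subtype.val (Submodule.linearProjOfIsCompl_apply_left hcompl.symm ⟨z, hz⟩)
  have hπ'right : ∀ y ∈ Y, π' y = 0 := by
    intro y hy
    show (↑(Y'.projectionOnto Y hcompl.symm y) : V) = 0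
    rw [Submodule.projectionOnto_apply_of_mem_right hcompl.symm hy]
    rfl
  have hdec : ∀ v : V, ∃ y ∈ Y, ∃ z ∈ Y', v = y + z := by
    intro v
    have hv : v ∈ Y ⊔ Y' := by rw [hYsup]; trivial
    obtain ⟨y, hy, z, hz, rfl⟩ := Submodule.mem_sup.mp hv
    exact ⟨y, hy, z, hz, rfl⟩
  have hπv : ∀ v, π v + π' v = v := by
    intro v
    obtain ⟨y, hy, z, hz, rfl⟩ := hdec v
    rw [map_add, map_add, hπleft y hy, hπright z hz, hπ'left z hz, hπ'right y hy]
    abel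
  have hπequiv : ∀ (nn : ↥N) (v : V), π (ρN nn v) = ρN nn (π v) := by
    intro nn v
    obtain ⟨y, hy, z, hz, rfl⟩ := hdec v
    rw [map_add, map_add, map_add, hπleft y hy, hπright z hz,
      hπleft _ (hYsub nn y hy), hπright _ (hY'sub nn z hz)]
    simp
  have hπ'equiv : ∀ (nn : ↥N) (v : V), π' (ρN nn v) = ρN nn (π' v) := by
    intro nn v
    obtain ⟨y, hy, z, hz, rfl⟩ := hdec v
    rw [map_add, map_add, map_add, hπ'left z hz, hπ'right y hy,
      hπ'left _ (hY'sub nn z hz), hπ'right _ (hYsub nn y hy)]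
    simp
  have hpol : ∀ v w, B (π v) (π' w) + B (π w) (π' v) = B v w := by
    intro v w
    conv_rhs => rw [← hπv v, ← hπv w]
    simp only [map_add, LinearMap.add_apply]
    rw [hYiso _ (hπY v) _ (hπY w), hY'iso _ (hπ'Y' v) _ (hπ'Y' w)]
    rw [hBsym (π' v) (π w)]
    ring
  refine ⟨fun v => B (π v) (π' v), B, ⟨?_, ?_⟩, ?_, hBnd⟩
  · intro a v
    show B (π (a • v)) (π' (a • v)) = a ^ 2 * B (π v) (π' v)
    simp only [map_smul, LinearMap.smul_apply, smul_eq_mul]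
    ring
  · intro v w
    show B (π (v + w)) (π' (v + w)) = B (π v) (π' v) + B v w + B (π w) (π' w)
    rw [← hpol v w]
    simp only [map_add, LinearMap.add_apply]
    ring
  · intro g v
    show B (π (ρ g v)) (π' (ρ g v)) = B (π v) (π' v)
    obtain ⟨y, hy, z, hz, rfl⟩ := hdec v
    have hq0 : ∀ (Z : Submodule F V), IsSubrep ρN Z → (∀ a ∈ Z, ∀ b ∈ Z, B a b = 0) →
        ∀ x ∈ Z, B (π x) (π' x) = 0 :=
      fun Z hZ hiso => q_zero hss hnsdall B π π' hπequiv hπ'equiv hBinvN hpol Z hZ hiso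
    have hYgiso : ∀ a ∈ Y.map (ρ g), ∀ b ∈ Y.map (ρ g), B a b = 0 := by
      rintro a ⟨y₁, hy₁, rfl⟩ b ⟨y₂, hy₂, rfl⟩
      rw [hBinv g]
      exact hYiso y₁ hy₁ y₂ hy₂
    have hY'giso : ∀ a ∈ Y'.map (ρ g), ∀ b ∈ Y'.map (ρ g), B a b = 0 := by
      rintro a ⟨y₁, hy₁, rfl⟩ b ⟨y₂, hy₂, rfl⟩
      rw [hBinv g]
      exact hY'iso y₁ hy₁ y₂ hy₂
    have h1 : B (π (ρ g y)) (π' (ρ g y)) = 0 :=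
      hq0 _ (hmapsub g Y hYsub) hYgiso _ ⟨y, hy, rfl⟩
    have h2 : B (π (ρ g z)) (π' (ρ g z)) = 0 :=
      hq0 _ (hmapsub g Y' hY'sub) hY'giso _ ⟨z, hz, rfl⟩
    have h3 : B (ρ g y) (ρ g z) = B y z := hBinv g y z
    have h4 : B y z = B (π (ρ g y)) (π' (ρ g z)) + B (π (ρ g z)) (π' (ρ g y)) := by
      rw [← h3]
      exact (hpol _ _).symm
    have hgyz : ρ g (y + z) = ρ g y + ρ g z := map_add _ y z
    have hRHS1 : π (y + z) = y := by rw [map_add, hπleft y hy, hπright z hz, add_zero]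
    have hRHS2 : π' (y + z) = z := by rw [map_add, hπ'right y hy, hπ'left z hz, zero_add]
    rw [hgyz, hRHS1, hRHS2]
    simp only [map_add, LinearMap.add_apply]
    rw [h1, h2, h4]
    ring
end

section
/- Let G be a finite group, F a perfect field of characteristic 2, and M a self-dual irreducible FG-module such that there is no FG-module W with socle isomorphic to the trivial module F and W/soc(W) ≅ M nonsplit (equivalently Ext¹_FG(M, F) = 0), and M is nontrivial. Then M is of quadratic type: every (equivalently, some) non-degenerate G-invariant alternating bilinear form B on M is the polarization of a G-invariant quadratic form. -/
open Module

section AuxProof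

variable {F : Type} [Field F] [CharP F 2]
variable {M : Type} [AddCommGroup M] [Module F M] [FiniteDimensional F M]

lemma aux_sq_add (x y : F) : (x + y)^2 = x^2 + y^2 := by
  haveI : Fact (Nat.Prime 2) := ⟨Nat.prime_two⟩
  exact add_pow_char x y 2

lemma aux_symm (B : M →ₗ[F] M →ₗ[F] F) (halt : ∀ v : M, B v v = 0) (v w : M) :
    B w v = B v w := by
  have h := halt (v + w)
  simp only [map_add, LinearMap.add_apply, halt v, halt w] at h
  have h2 : B v w + B w v = 0 := by linear_combination h
  rw [eq_neg_of_add_eq_zero_right h2, CharTwo.neg_eq]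

lemma exists_half (B : M →ₗ[F] M →ₗ[F] F) (halt : ∀ v : M, B v v = 0) :
    ∃ B' : M →ₗ[F] M →ₗ[F] F, ∀ v w, B' v w + B' w v = B v w := by
  classical
  set n := Module.finrank F M with hn
  set b := Module.finBasis F M with hb
  set S : Finset (Fin n × Fin n) := Finset.univ.filter fun p => p.1 < p.2 with hS
  refine ⟨LinearMap.mk₂ F
    (fun v w => ∑ p ∈ S, b.repr v p.1 * b.repr w p.2 * B (b p.1) (b p.2))
    ?_ ?_ ?_ ?_, ?_⟩
  · intro m₁ m₂ nn
    rw [← Finset.sum_add_distrib]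
    refine Finset.sum_congr rfl fun p _ => ?_
    simp only [map_add, Finsupp.add_apply]
    ring
  · intro c m nn
    rw [Finset.smul_sum]
    refine Finset.sum_congr rfl fun p _ => ?_
    simp only [map_smul, Finsupp.smul_apply, smul_eq_mul]
    ring
  · intro m n₁ n₂
    rw [← Finset.sum_add_distrib]
    refine Finset.sum_congr rfl fun p _ => ?_
    simp only [map_add, Finsupp.add_apply]
    ring
  · intro c m nn
    rw [Finset.smul_sum]
    refine Finset.sum_congr rfl fun p _ => ?_
    simp only [map_smul, Finsupp.smul_apply, smul_eq_mul]
    ring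
  · intro v w
    simp only [LinearMap.mk₂_apply]
    set X := b.repr v with hX
    set Y := b.repr w with hY
    have h1 : ∀ u : M, B u w = ∑ j : Fin n, Y j * B u (b j) := by
      intro u
      conv_lhs => rw [← b.sum_repr w]
      rw [map_sum]
      refine Finset.sum_congr rfl fun j _ => ?_
      rw [map_smul, smul_eq_mul]
    have hexp : B v w = ∑ i : Fin n, ∑ j : Fin n, X i * Y j * B (b i) (b j) := by
      conv_lhs => rw [← b.sum_repr v]
      rw [map_sum, LinearMap.sum_apply]
      refine Finset.sum_congr rfl fun i _ => ?_
      rw [map_smul, LinearMap.smul_apply, smul_eq_mul, h1, Finset.mul_sum]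
      refine Finset.sum_congr rfl fun j _ => ?_
      ring
    set f : Fin n × Fin n → F := fun p => X p.1 * Y p.2 * B (b p.1) (b p.2) with hf
    have hprod : B v w = ∑ p ∈ (Finset.univ : Finset (Fin n × Fin n)), f p := by
      rw [hexp, ← Finset.univ_product_univ, Finset.sum_product]
    have hsplit : ∑ p ∈ (Finset.univ : Finset (Fin n × Fin n)), f p
        = ∑ p ∈ S, f p + ∑ p ∈ Finset.univ.filter (fun p : Fin n × Fin n => ¬ p.1 < p.2), f p := by
      rw [Finset.sum_filter_add_sum_filter_not]
    have hgt : ∑ p ∈ Finset.univ.filter (fun p : Fin n × Fin n => ¬ p.1 < p.2), f p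
        = ∑ p ∈ Finset.univ.filter (fun p : Fin n × Fin n => p.2 < p.1), f p := by
      refine (Finset.sum_subset ?_ ?_).symm
      · intro p hp
        simp only [Finset.mem_filter, Finset.mem_univ, true_and] at hp ⊢
        exact not_lt_of_gt hp
      · intro p hp hnp
        simp only [Finset.mem_filter, Finset.mem_univ, true_and] at hp hnp
        have : p.1 = p.2 := le_antisymm (not_lt.mp hnp) (not_lt.mp hp)
        simp only [hf, ← this, halt, mul_zero]
    have hswap : ∑ p ∈ Finset.univ.filter (fun p : Fin n × Fin n => p.2 < p.1), f p
        = ∑ p ∈ S, Y p.1 * X p.2 * B (b p.1) (b p.2) := by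
      refine Finset.sum_nbij' Prod.swap Prod.swap ?_ ?_ ?_ ?_ ?_
      · intro p hp
        simp only [Finset.mem_filter, Finset.mem_univ, true_and, hS] at hp ⊢
        exact hp
      · intro p hp
        simp only [Finset.mem_filter, Finset.mem_univ, true_and, hS] at hp ⊢
        exact hp
      · intro p _; rfl
      · intro p _; rfl
      · intro p _
        simp only [hf, Prod.fst_swap, Prod.snd_swap]
        rw [aux_symm B halt (b p.2) (b p.1)]
        ring
    rw [hprod, hsplit, hgt, hswap]

variable [PerfectField F]

noncomputable def fsqrt (x : F) : F := (frobeniusEquiv F 2).symm x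

lemma fsqrt_sq (a : F) : fsqrt (a^2) = a := by
  rw [fsqrt, show a^2 = frobeniusEquiv F 2 a from by simp [frobenius_def],
    RingEquiv.symm_apply_apply]

lemma sq_fsqrt (a : F) : (fsqrt a)^2 = a := by
  have := (frobeniusEquiv F 2).apply_symm_apply a
  simpa [frobenius_def, fsqrt] using this

lemma fsqrt_add (x y : F) : fsqrt (x + y) = fsqrt x + fsqrt y := map_add _ x y

lemma fsqrt_mul (x y : F) : fsqrt (x * y) = fsqrt x * fsqrt y := map_mul _ x y

lemma fsqrt_zero : fsqrt (0 : F) = 0 := map_zero _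

lemma sq_injF {a b : F} (h : a^2 = b^2) : a = b := by
  rw [← fsqrt_sq a, ← fsqrt_sq b, h]

end AuxProof

/-- if M is a nontrivial self-dual irreducible FG-module with
Ext¹(M, F) = 0 (every extension of M by the trivial module splits), then every non-degenerate
G-invariant alternating bilinear form on M is the polarization of a G-invariant quadratic
form. -/
theorem stmt_16 {F : Type} [Field F] [CharP F 2] [PerfectField F]
    {G : Type} [Group G] [Finite G]
    {M : Type} [AddCommGroup M] [Module F M] [FiniteDimensional F M]
    (ρ : Representation F G M) (hirr : IsIrred ρ) (hsd : IsSelfDual ρ)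
    (hnt : ¬ IsTrivialRep ρ)
    (hext : ∀ (W : Type) [AddCommGroup W] [Module F W] (τ : Representation F G W)
        (ι : F →ₗ[F] W) (π : W →ₗ[F] M),
      (∀ (g : G) (a : F), τ g (ι a) = ι a) →
      (∀ (g : G) (w : W), π (τ g w) = ρ g (π w)) →
      Function.Injective ι → Function.Surjective π →
      LinearMap.range ι = LinearMap.ker π →
      ∃ s : M →ₗ[F] W, (∀ (g : G) (m : M), s (ρ g m) = τ g (s m)) ∧
        π.comp s = LinearMap.id) :
    ∀ B : M →ₗ[F] M →ₗ[F] F, BilinInvariant ρ B → Nondeg B → IsAltForm B →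
      ∃ Q : M → F, PolarizesTo Q B ∧ QuadInvariant ρ Q := by
  intro B hBinv _hBnd halt
  classical
  obtain ⟨B', hB'⟩ := exists_half B halt
  -- quadratic form Q0 v = B' v v polarizes B
  have hQ0pol : ∀ v w : M, B' (v + w) (v + w) = B' v v + B v w + B' w w := by
    intro v w
    simp only [map_add, LinearMap.add_apply]
    rw [← hB' v w]; ring
  have hQ0sm : ∀ (a : F) (v : M), B' (a • v) (a • v) = a ^ 2 * B' v v := by
    intro a v
    simp only [map_smul, LinearMap.smul_apply, smul_eq_mul]; ring
  -- the defect functional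
  let φ : G → (M →ₗ[F] F) := fun g =>
    { toFun := fun v => fsqrt (B' (ρ g v) (ρ g v) - B' v v)
      map_add' := fun v w => by
        have h : B' (ρ g (v + w)) (ρ g (v + w)) - B' (v + w) (v + w)
            = (B' (ρ g v) (ρ g v) - B' v v) + (B' (ρ g w) (ρ g w) - B' w w) := by
          rw [map_add, hQ0pol, hQ0pol, hBinv g v w]; ring
        rw [h, fsqrt_add]
      map_smul' := fun a v => by
        have h : B' (ρ g (a • v)) (ρ g (a • v)) - B' (a • v) (a • v)
            = a ^ 2 * (B' (ρ g v) (ρ g v) - B' v v) := by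
          rw [map_smul, hQ0sm, hQ0sm]; ring
        simp only [RingHom.id_apply, smul_eq_mul]
        rw [h, fsqrt_mul, fsqrt_sq] }
  have hφapp : ∀ (g : G) (v : M), φ g v = fsqrt (B' (ρ g v) (ρ g v) - B' v v) :=
    fun g v => rfl
  have hφsq : ∀ (g : G) (v : M), (φ g v) ^ 2 = B' (ρ g v) (ρ g v) - B' v v := by
    intro g v; rw [hφapp, sq_fsqrt]
  have hφ1 : ∀ v : M, φ 1 v = 0 := by
    intro v
    rw [hφapp]
    simp only [map_one, Module.End.one_apply, sub_self, fsqrt_zero]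
  have hcoc : ∀ (g h : G) (v : M), φ (g * h) v = φ g (ρ h v) + φ h v := by
    intro g h v
    apply sq_injF
    rw [aux_sq_add, hφsq, hφsq, hφsq, map_mul, Module.End.mul_apply]
    ring
  -- the extension W = F × M
  let T : G → (F × M) →ₗ[F] (F × M) := fun g =>
    LinearMap.prod (LinearMap.fst F F M + (φ g).comp (LinearMap.snd F F M))
      ((ρ g).comp (LinearMap.snd F F M))
  have hT : ∀ (g : G) (w : F × M), T g w = (w.1 + φ g w.2, ρ g w.2) := fun g w => rfl
  let τ : Representation F G (F × M) :=
    { toFun := T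
      map_one' := by
        apply LinearMap.ext; intro w
        rw [hT]
        simp only [hφ1, add_zero, map_one, Module.End.one_apply]
      map_mul' := by
        intro g h
        apply LinearMap.ext; intro w
        rw [Module.End.mul_apply, hT, hT, hT]
        refine Prod.ext ?_ ?_
        · show w.1 + φ (g * h) w.2 = (w.1 + φ h w.2) + φ g (ρ h w.2)
          rw [hcoc]; ring
        · show ρ (g * h) w.2 = ρ g (ρ h w.2)
          rw [map_mul, Module.End.mul_apply] }
  have hτapp : ∀ (g : G) (w : F × M), τ g w = (w.1 + φ g w.2, ρ g w.2) := fun g w => rfl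
  obtain ⟨s, hsint, hsπ⟩ := hext (F × M) τ (LinearMap.inl F F M) (LinearMap.snd F F M)
    (fun g a => by
      rw [LinearMap.inl_apply, hτapp]
      simp only [map_zero, add_zero])
    (fun g w => by rw [hτapp]; rfl)
    LinearMap.inl_injective LinearMap.snd_surjective (LinearMap.range_inl F F M)
  have hs2 : ∀ m : M, (s m).2 = m := fun m => LinearMap.ext_iff.mp hsπ m
  set ψ : M →ₗ[F] F := (LinearMap.fst F F M).comp s with hψdef
  have hψ : ∀ (g : G) (m : M), ψ (ρ g m) = ψ m + φ g m := by
    intro g m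
    have h := hsint g m
    have h1 : (s (ρ g m)).1 = (s m).1 + φ g ((s m).2) := by rw [h, hτapp]
    rw [hs2 m] at h1
    exact h1
  refine ⟨fun v => B' v v + (ψ v) ^ 2, ⟨?_, ?_⟩, ?_⟩
  · intro a v
    dsimp only
    rw [hQ0sm, map_smul, smul_eq_mul, mul_pow]
    ring
  · intro v w
    dsimp only
    simp only [hQ0pol, map_add, LinearMap.add_apply, aux_sq_add]
    linear_combination hB' v w
  · intro g v
    dsimp only
    have h1 : B' (ρ g v) (ρ g v) = B' v v + (φ g v) ^ 2 := by
      rw [hφsq]; ring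
    rw [h1, hψ, aux_sq_add]
    have h2 : (φ g v) ^ 2 + (φ g v) ^ 2 = 0 := CharTwo.add_self_eq_zero _
    linear_combination h2
end
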